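/- arXiv:1303.0482 — 10 statements merged into one kernel-verified Lean document; each statement's English description precedes it below -/
import Mathlib

section
/- For every γ in the closed unit ball of ℂ with |γ| ≤ 1, the function G(z) = z₁/√(1 + γ·z₂²) is a well-defined holomorphic map from the Euclidean unit ball 𝔹₂ = {z ∈ ℂ² : |z₁|² + |z₂|² < 1} to the unit disc 𝔻, and G(λ, 0) = λ for all λ ∈ 𝔻. In particular, the complex geodesic λ ↦ (λ, 0) in 𝔹₂ has infinitely many distinct left inverses. -/
open Complex

lemma sqrt_half_sq (a : ℂ) : (a ^ ((1:ℂ)/2)) ^ 2 = a := by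
  have h : ((1:ℂ)/2) = ((2:ℕ):ℂ)⁻¹ := by norm_num
  rw [h, Complex.cpow_nat_inv_pow a (by norm_num)]

lemma sqrt_half_ne_zero {a : ℂ} (ha : a ≠ 0) : a ^ ((1:ℂ)/2) ≠ 0 := by
  rw [Ne, Complex.cpow_eq_zero_iff]
  rintro ⟨h, -⟩; exact ha h

lemma aux_main (γ : ℂ) (hγ : ‖γ‖ ≤ 1) :
    DifferentiableOn ℂ (fun z : ℂ × ℂ => z.1 / (1 + γ * z.2 ^ 2) ^ ((1 : ℂ) / 2))
      {z : ℂ × ℂ | ‖z.1‖ ^ 2 + ‖z.2‖ ^ 2 < 1} ∧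
    (∀ z : ℂ × ℂ, ‖z.1‖ ^ 2 + ‖z.2‖ ^ 2 < 1 →
      ‖z.1 / (1 + γ * z.2 ^ 2) ^ ((1 : ℂ) / 2)‖ < 1) ∧
    (∀ w : ℂ, ‖w‖ < 1 → w / (1 + γ * (0 : ℂ) ^ 2) ^ ((1 : ℂ) / 2) = w) := by
  have key : ∀ w : ℂ, ‖w‖ ^ 2 < 1 →
      1 - ‖w‖ ^ 2 ≤ ‖1 + γ * w ^ 2‖ ∧ 0 < (1 + γ * w ^ 2).re := by
    intro w hw
    have h1 : ‖γ * w ^ 2‖ ≤ ‖w‖ ^ 2 := by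
      rw [norm_mul, norm_pow]
      nlinarith [norm_nonneg γ, norm_nonneg w, sq_nonneg (‖w‖)]
    constructor
    · have h2 := norm_sub_norm_le (1 : ℂ) (-(γ * w ^ 2))
      simp only [norm_one, norm_neg, sub_neg_eq_add] at h2
      linarith
    · have h3 : -(‖γ * w ^ 2‖) ≤ (γ * w ^ 2).re := by
        have := Complex.abs_re_le_norm (γ * w ^ 2)
        rw [abs_le] at this
        simpa using this.1
      have h4 : (1 + γ * w ^ 2).re = 1 + (γ * w ^ 2).re := by simp
      rw [h4]; linarith
  have hne : ∀ w : ℂ, ‖w‖ ^ 2 < 1 → (1 + γ * w ^ 2) ≠ 0 := by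
    intro w hw h
    have := (key w hw).2
    rw [h] at this; simp at this
  refine ⟨?_, ?_, ?_⟩
  · intro z hz
    simp only [Set.mem_setOf_eq] at hz
    have hz2 : ‖z.2‖ ^ 2 < 1 := by nlinarith [sq_nonneg (‖z.1‖)]
    apply DifferentiableAt.differentiableWithinAt
    have hd : DifferentiableAt ℂ (fun z : ℂ × ℂ => 1 + γ * z.2 ^ 2) z :=
      (differentiableAt_const _).add
        ((differentiableAt_const γ).mul ((differentiableAt_snd).pow 2))
    have hd2 : DifferentiableAt ℂ (fun z : ℂ × ℂ => (1 + γ * z.2 ^ 2) ^ ((1:ℂ)/2)) z :=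
      hd.cpow (differentiableAt_const _) (Or.inl (key z.2 hz2).2)
    have hre : (fun z : ℂ × ℂ => z.1 / (1 + γ * z.2 ^ 2) ^ ((1:ℂ)/2))
        = fun z : ℂ × ℂ => z.1 * ((1 + γ * z.2 ^ 2) ^ ((1:ℂ)/2))⁻¹ := by
      funext w; rw [div_eq_mul_inv]
    rw [hre]
    exact differentiableAt_fst.mul (hd2.inv (sqrt_half_ne_zero (hne z.2 hz2)))
  · intro z hz
    have hz2 : ‖z.2‖ ^ 2 < 1 := by nlinarith [sq_nonneg (‖z.1‖)]
    have hk := key z.2 hz2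
    have hA : (0:ℝ) < ‖1 + γ * z.2 ^ 2‖ := by nlinarith
    have hnorm : ‖(1 + γ * z.2 ^ 2) ^ ((1:ℂ)/2)‖ = ‖1 + γ * z.2 ^ 2‖ ^ ((1:ℝ)/2) := by
      have : ((1:ℂ)/2) = (((1:ℝ)/2 : ℝ) : ℂ) := by norm_num
      rw [this]
      simpa using Complex.norm_cpow_real (1 + γ * z.2 ^ 2) ((1:ℝ)/2)
    rw [norm_div, hnorm]
    rw [div_lt_one (by positivity)]
    have hlt : ‖z.1‖ ^ 2 < ‖1 + γ * z.2 ^ 2‖ := by nlinarith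
    rw [← Real.sqrt_eq_rpow]
    have := Real.lt_sqrt (norm_nonneg z.1) (y := ‖1 + γ * z.2 ^ 2‖)
    exact this.mpr hlt
  · intro w _
    simp [Complex.one_cpow]

/-- For every γ with |γ| ≤ 1, the function `G(z) = z₁ / √(1 + γ·z₂²)` (principal
branch, via `cpow`) is holomorphic on the Euclidean unit ball 𝔹₂ of ℂ², maps 𝔹₂
into the unit disc, and satisfies `G(w,0) = w`; in particular the complex geodesic
`w ↦ (w,0)` of 𝔹₂ has infinitely many distinct left inverses. -/
theorem ball_left_inverses (γ : ℂ) (hγ : ‖γ‖ ≤ 1) :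
    DifferentiableOn ℂ (fun z : ℂ × ℂ => z.1 / (1 + γ * z.2 ^ 2) ^ ((1 : ℂ) / 2))
      {z : ℂ × ℂ | ‖z.1‖ ^ 2 + ‖z.2‖ ^ 2 < 1} ∧
    (∀ z : ℂ × ℂ, ‖z.1‖ ^ 2 + ‖z.2‖ ^ 2 < 1 →
      ‖z.1 / (1 + γ * z.2 ^ 2) ^ ((1 : ℂ) / 2)‖ < 1) ∧
    (∀ w : ℂ, ‖w‖ < 1 → w / (1 + γ * (0 : ℂ) ^ 2) ^ ((1 : ℂ) / 2) = w) ∧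
    {F : ℂ × ℂ → ℂ |
      DifferentiableOn ℂ F {z : ℂ × ℂ | ‖z.1‖ ^ 2 + ‖z.2‖ ^ 2 < 1} ∧
      (∀ z : ℂ × ℂ, ‖z.1‖ ^ 2 + ‖z.2‖ ^ 2 < 1 → ‖F z‖ < 1) ∧
      (∀ w : ℂ, ‖w‖ < 1 → F (w, 0) = w)}.Infinite := by
  obtain ⟨h1, h2, h3⟩ := aux_main γ hγ
  refine ⟨h1, h2, h3, ?_⟩
  set c : ℕ → ℂ := fun n => 1 / ((n:ℂ) + 2) with hc
  have hcnorm : ∀ n : ℕ, ‖c n‖ ≤ 1 := by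
    intro n
    have : ((n:ℂ) + 2) = ((n+2 : ℕ) : ℂ) := by push_cast; ring
    rw [hc]; simp only [this, norm_div, norm_one, Complex.norm_natCast]
    rw [div_le_one (by positivity)]
    exact_mod_cast Nat.le_add_left 1 (n+1)
  have hcinj : Function.Injective c := by
    intro m n h
    have hm : ((m:ℂ)+2) ≠ 0 := by
      have e : ((m:ℂ)+2) = ((m+2:ℕ):ℂ) := by push_cast; ring
      rw [e]
      exact_mod_cast Nat.succ_ne_zero (m+1)
    have hn : ((n:ℂ)+2) ≠ 0 := by
      have e : ((n:ℂ)+2) = ((n+2:ℕ):ℂ) := by push_cast; ring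
      rw [e]
      exact_mod_cast Nat.succ_ne_zero (n+1)
    rw [hc] at h
    simp only at h
    rw [div_eq_div_iff hm hn, one_mul, one_mul] at h
    have h2 : (m:ℂ) = (n:ℂ) := by linear_combination -h
    exact Nat.cast_injective h2
  have hAne : ∀ n : ℕ, (1 + c n * ((1:ℂ)/2) ^ 2) ≠ 0 := by
    intro n h
    have h1 : c n * ((1:ℂ)/2) ^ 2 = -1 := by linear_combination h
    have h2 : ‖c n * ((1:ℂ)/2) ^ 2‖ = 1 := by rw [h1]; simp
    have h3 : ‖c n * ((1:ℂ)/2) ^ 2‖ ≤ 1/4 := by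
      rw [norm_mul, norm_pow]
      have : ‖(1:ℂ)/2‖ = 1/2 := by simp
      rw [this]
      nlinarith [hcnorm n, norm_nonneg (c n)]
    linarith
  apply Set.infinite_of_injective_forall_mem
    (f := fun n : ℕ => fun z : ℂ × ℂ => z.1 / (1 + c n * z.2 ^ 2) ^ ((1 : ℂ) / 2))
  · intro m n h
    have he := congrFun h ((1:ℂ)/2, (1:ℂ)/2)
    simp only at he
    have hm2 := sqrt_half_ne_zero (hAne m)
    have hn2 := sqrt_half_ne_zero (hAne n)
    rw [div_eq_div_iff hm2 hn2] at he
    have heq : (1 + c n * ((1:ℂ)/2) ^ 2) ^ ((1:ℂ)/2)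
        = (1 + c m * ((1:ℂ)/2) ^ 2) ^ ((1:ℂ)/2) :=
      mul_left_cancel₀ (by norm_num : ((1:ℂ)/2) ≠ 0) he
    have hsq : (1 + c n * ((1:ℂ)/2) ^ 2) = (1 + c m * ((1:ℂ)/2) ^ 2) := by
      have h5 := congrArg (fun x => x ^ 2) heq
      simpa [sqrt_half_sq] using h5
    have hcmn : c m = c n := by linear_combination -4 * hsq
    exact hcinj hcmn
  · intro n
    obtain ⟨g1, g2, g3⟩ := aux_main (c n) (hcnorm n)
    exact ⟨g1, g2, fun w hw => g3 w hw⟩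
end

section
/- Let h lie in the closed unit ball of H^∞(𝔻²) (i.e. h : 𝔻² → ℂ holomorphic with |h| ≤ 1) and let t ∈ [0,1]. Then the function F(z₁,z₂) = (t·z₁ + (1−t)·z₂ − z₁·z₂·h(z₁,z₂)) / (1 − ((1−t)·z₁ + t·z₂)·h(z₁,z₂)) is well defined (the denominator never vanishes on 𝔻²), maps 𝔻² into 𝔻, and satisfies F(λ, λ) = λ for all λ ∈ 𝔻. -/
private lemma sqn (z : ℂ) : ‖z‖ ^ 2 = z.re ^ 2 + z.im ^ 2 := by
  rw [Complex.sq_norm, Complex.normSq_apply]; ring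

private lemma gen (A B C c : ℂ) :
    ‖1 - C * c‖ ^ 2 - ‖A - B * c‖ ^ 2 =
      1 - ‖A‖ ^ 2 + 2 * (c * ((starRingEnd ℂ) A * B - C)).re
        + ‖c‖ ^ 2 * (‖C‖ ^ 2 - ‖B‖ ^ 2) := by
  simp only [sqn, Complex.mul_re, Complex.mul_im, Complex.sub_re, Complex.sub_im,
    Complex.one_re, Complex.one_im, Complex.conj_re, Complex.conj_im]
  ring

private lemma real_ineq (t x y ρ p w : ℝ) (ht0 : 0 ≤ t) (ht1 : t ≤ 1)
    (hx0 : 0 ≤ x) (hx1 : x < 1) (hy0 : 0 ≤ y) (hy1 : y < 1)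
    (hρ0 : 0 ≤ ρ) (hρ1 : ρ ≤ 1) (hple : p ≤ x * y)
    (hw : -(ρ * (t * (1 - x ^ 2) * y + (1 - t) * (1 - y ^ 2) * x)) ≤ w) :
    0 < 1 - (t ^ 2 * x ^ 2 + (1 - t) ^ 2 * y ^ 2 + 2 * t * (1 - t) * p) + 2 * w
      + ρ ^ 2 * ((1 - t) ^ 2 * x ^ 2 + t ^ 2 * y ^ 2 + 2 * t * (1 - t) * p
          - x ^ 2 * y ^ 2) := by
  have hid : 1 - (t ^ 2 * x ^ 2 + (1 - t) ^ 2 * y ^ 2 + 2 * t * (1 - t) * p) + 2 * w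
      + ρ ^ 2 * ((1 - t) ^ 2 * x ^ 2 + t ^ 2 * y ^ 2 + 2 * t * (1 - t) * p
          - x ^ 2 * y ^ 2)
      = t * (1 - x ^ 2) * (1 - ρ * y) ^ 2 + (1 - t) * (1 - y ^ 2) * (1 - ρ * x) ^ 2
        + t * (1 - t) * (1 - ρ ^ 2) * (x - y) ^ 2
        + 2 * (t * (1 - t) * (1 - ρ ^ 2) * (x * y - p))
        + 2 * (w + ρ * (t * (1 - x ^ 2) * y + (1 - t) * (1 - y ^ 2) * x)) := by
    ring
  have hx2 : 0 < 1 - x ^ 2 := by nlinarith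
  have hy2 : 0 < 1 - y ^ 2 := by nlinarith
  have hρ2 : 0 ≤ 1 - ρ ^ 2 := by nlinarith
  have hρy : 0 < 1 - ρ * y := by nlinarith
  have hρx : 0 < 1 - ρ * x := by nlinarith
  have hA1 : 0 ≤ t * (1 - x ^ 2) * (1 - ρ * y) ^ 2 := by positivity
  have hA2 : 0 ≤ (1 - t) * (1 - y ^ 2) * (1 - ρ * x) ^ 2 := by
    have h1 : 0 ≤ 1 - t := by linarith
    positivity
  have hA3 : 0 ≤ t * (1 - t) * (1 - ρ ^ 2) * (x - y) ^ 2 := by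
    have h1 : 0 ≤ 1 - t := by linarith
    positivity
  have hA4 : 0 ≤ 2 * (t * (1 - t) * (1 - ρ ^ 2) * (x * y - p)) := by
    have h1 : 0 ≤ 1 - t := by linarith
    have h3 : 0 ≤ x * y - p := by linarith
    positivity
  have hA5 : 0 ≤ 2 * (w + ρ * (t * (1 - x ^ 2) * y + (1 - t) * (1 - y ^ 2) * x)) := by
    linarith
  have hpos : 0 < t * (1 - x ^ 2) * (1 - ρ * y) ^ 2
      + (1 - t) * (1 - y ^ 2) * (1 - ρ * x) ^ 2 := by
    rcases ht0.lt_or_eq with h | h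
    · have h1 : 0 < t * (1 - x ^ 2) * (1 - ρ * y) ^ 2 :=
        mul_pos (mul_pos h hx2) (pow_pos hρy 2)
      linarith
    · have h1t : 0 < 1 - t := by rw [← h]; norm_num
      have h1 : 0 < (1 - t) * (1 - y ^ 2) * (1 - ρ * x) ^ 2 :=
        mul_pos (mul_pos h1t hy2) (pow_pos hρx 2)
      linarith
  linarith [hid.ge, hid.le]

private lemma key_ineq (a b c : ℂ) (t : ℝ) (ht0 : 0 ≤ t) (ht1 : t ≤ 1)
    (ha : ‖a‖ < 1) (hb : ‖b‖ < 1) (hc : ‖c‖ ≤ 1) :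
    ‖(t : ℂ) * a + (1 - (t : ℂ)) * b - a * b * c‖ <
      ‖1 - (((1 : ℂ) - t) * a + (t : ℂ) * b) * c‖ := by
  have hca : (starRingEnd ℂ) a * a = ((‖a‖ : ℂ)) ^ 2 := by
    rw [mul_comm, Complex.mul_conj, Complex.normSq_eq_norm_sq]
    push_cast; ring
  have hcb : (starRingEnd ℂ) b * b = ((‖b‖ : ℂ)) ^ 2 := by
    rw [mul_comm, Complex.mul_conj, Complex.normSq_eq_norm_sq]
    push_cast; ring
  have hβ : (starRingEnd ℂ) ((t : ℂ) * a + (1 - (t : ℂ)) * b) * (a * b)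
        - (((1 : ℂ) - t) * a + (t : ℂ) * b)
      = ((t * (‖a‖ ^ 2 - 1) : ℝ) : ℂ) * b + (((1 - t) * (‖b‖ ^ 2 - 1) : ℝ) : ℂ) * a := by
    simp only [map_add, map_mul, map_sub, map_one, Complex.conj_ofReal]
    push_cast
    linear_combination ((t : ℂ) * b) * hca + ((1 : ℂ) - t) * a * hcb
  have hβn : ‖(starRingEnd ℂ) ((t : ℂ) * a + (1 - (t : ℂ)) * b) * (a * b)
        - (((1 : ℂ) - t) * a + (t : ℂ) * b)‖
      ≤ t * (1 - ‖a‖ ^ 2) * ‖b‖ + (1 - t) * (1 - ‖b‖ ^ 2) * ‖a‖ := by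
    rw [hβ]
    refine (norm_add_le _ _).trans ?_
    rw [norm_mul, norm_mul, Complex.norm_real ((t * (‖a‖ ^ 2 - 1) : ℝ)),
      Real.norm_eq_abs, Complex.norm_real (((1 - t) * (‖b‖ ^ 2 - 1) : ℝ)),
      Real.norm_eq_abs]
    have h1 : |t * (‖a‖ ^ 2 - 1)| = t * (1 - ‖a‖ ^ 2) := by
      rw [abs_mul, abs_of_nonneg ht0,
        abs_of_nonpos (by nlinarith [norm_nonneg a] : ‖a‖ ^ 2 - 1 ≤ 0)]
      ring
    have h2 : |(1 - t) * (‖b‖ ^ 2 - 1)| = (1 - t) * (1 - ‖b‖ ^ 2) := by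
      rw [abs_mul, abs_of_nonneg (by linarith : (0:ℝ) ≤ 1 - t),
        abs_of_nonpos (by nlinarith [norm_nonneg b] : ‖b‖ ^ 2 - 1 ≤ 0)]
      ring
    rw [h1, h2]
  have hw : -(‖c‖ * (t * (1 - ‖a‖ ^ 2) * ‖b‖ + (1 - t) * (1 - ‖b‖ ^ 2) * ‖a‖))
      ≤ (c * ((starRingEnd ℂ) ((t : ℂ) * a + (1 - (t : ℂ)) * b) * (a * b)
        - (((1 : ℂ) - t) * a + (t : ℂ) * b))).re := by
    have h1 : |(c * ((starRingEnd ℂ) ((t : ℂ) * a + (1 - (t : ℂ)) * b) * (a * b)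
        - (((1 : ℂ) - t) * a + (t : ℂ) * b))).re|
        ≤ ‖c * ((starRingEnd ℂ) ((t : ℂ) * a + (1 - (t : ℂ)) * b)
        * (a * b) - (((1 : ℂ) - t) * a + (t : ℂ) * b))‖ := by
      exact Complex.abs_re_le_norm _
    have h2 : ‖c * ((starRingEnd ℂ) ((t : ℂ) * a + (1 - (t : ℂ)) * b) * (a * b)
        - (((1 : ℂ) - t) * a + (t : ℂ) * b))‖
        ≤ ‖c‖ * (t * (1 - ‖a‖ ^ 2) * ‖b‖ + (1 - t) * (1 - ‖b‖ ^ 2) * ‖a‖) := by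
      rw [norm_mul]
      exact mul_le_mul_of_nonneg_left hβn (norm_nonneg c)
    have h3 := neg_abs_le ((c * ((starRingEnd ℂ) ((t : ℂ) * a + (1 - (t : ℂ)) * b)
        * (a * b) - (((1 : ℂ) - t) * a + (t : ℂ) * b))).re)
    linarith
  have hple : (a * (starRingEnd ℂ) b).re ≤ ‖a‖ * ‖b‖ := by
    have h1 : |(a * (starRingEnd ℂ) b).re| ≤ ‖a * (starRingEnd ℂ) b‖ := by
      exact Complex.abs_re_le_norm _
    have h2 : ‖a * (starRingEnd ℂ) b‖ = ‖a‖ * ‖b‖ := by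
      rw [norm_mul, RCLike.norm_conj]
    have h3 := le_abs_self ((a * (starRingEnd ℂ) b).re)
    linarith
  have hnA : ‖(t : ℂ) * a + (1 - (t : ℂ)) * b‖ ^ 2
      = t ^ 2 * ‖a‖ ^ 2 + (1 - t) ^ 2 * ‖b‖ ^ 2
        + 2 * t * (1 - t) * (a * (starRingEnd ℂ) b).re := by
    simp only [sqn, Complex.add_re, Complex.add_im, Complex.mul_re, Complex.mul_im,
      Complex.sub_re, Complex.sub_im, Complex.one_re, Complex.one_im,
      Complex.ofReal_re, Complex.ofReal_im, Complex.conj_re, Complex.conj_im]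
    ring
  have hnC : ‖((1 : ℂ) - t) * a + (t : ℂ) * b‖ ^ 2
      = (1 - t) ^ 2 * ‖a‖ ^ 2 + t ^ 2 * ‖b‖ ^ 2
        + 2 * t * (1 - t) * (a * (starRingEnd ℂ) b).re := by
    simp only [sqn, Complex.add_re, Complex.add_im, Complex.mul_re, Complex.mul_im,
      Complex.sub_re, Complex.sub_im, Complex.one_re, Complex.one_im,
      Complex.ofReal_re, Complex.ofReal_im, Complex.conj_re, Complex.conj_im]
    ring
  have hnB : ‖a * b‖ ^ 2 = ‖a‖ ^ 2 * ‖b‖ ^ 2 := by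
    rw [norm_mul]; ring
  have hE : 0 < ‖1 - (((1 : ℂ) - t) * a + (t : ℂ) * b) * c‖ ^ 2
      - ‖((t : ℂ) * a + (1 - (t : ℂ)) * b) - (a * b) * c‖ ^ 2 := by
    rw [gen ((t : ℂ) * a + (1 - (t : ℂ)) * b) (a * b) (((1 : ℂ) - t) * a + (t : ℂ) * b) c,
      hnA, hnC, hnB]
    have H := real_ineq t ‖a‖ ‖b‖ ‖c‖ ((a * (starRingEnd ℂ) b).re)
      ((c * ((starRingEnd ℂ) ((t : ℂ) * a + (1 - (t : ℂ)) * b) * (a * b)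
        - (((1 : ℂ) - t) * a + (t : ℂ) * b))).re)
      ht0 ht1 (norm_nonneg a) ha (norm_nonneg b) hb (norm_nonneg c) hc hple hw
    nlinarith [H]
  have hgoal : ‖((t : ℂ) * a + (1 - (t : ℂ)) * b) - (a * b) * c‖ <
      ‖1 - (((1 : ℂ) - t) * a + (t : ℂ) * b) * c‖ := by
    nlinarith [hE, norm_nonneg (((t : ℂ) * a + (1 - (t : ℂ)) * b) - (a * b) * c),
      norm_nonneg (1 - (((1 : ℂ) - t) * a + (t : ℂ) * b) * c)]
  have e1 : (t : ℂ) * a + (1 - (t : ℂ)) * b - a * b * c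
      = ((t : ℂ) * a + (1 - (t : ℂ)) * b) - (a * b) * c := by ring
  rw [e1]
  exact hgoal

/-- Agler–McCarthy description (converse direction): for `h` holomorphic on the
bidisc with `|h| ≤ 1` and `t ∈ [0,1]`, the function
`F(z₁,z₂) = (t z₁ + (1−t) z₂ − z₁ z₂ h(z₁,z₂)) / (1 − ((1−t) z₁ + t z₂) h(z₁,z₂))`
is well defined (its denominator never vanishes on 𝔻²), maps 𝔻² into 𝔻, and
satisfies `F(w,w) = w` for all `w ∈ 𝔻`. -/
theorem retract_diagonal_formula (h : ℂ × ℂ → ℂ)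
    (hhol : DifferentiableOn ℂ h {z : ℂ × ℂ | ‖z.1‖ < 1 ∧ ‖z.2‖ < 1})
    (hbd : ∀ z : ℂ × ℂ, ‖z.1‖ < 1 → ‖z.2‖ < 1 → ‖h z‖ ≤ 1)
    (t : ℝ) (ht : t ∈ Set.Icc (0 : ℝ) 1) :
    (∀ z : ℂ × ℂ, ‖z.1‖ < 1 → ‖z.2‖ < 1 →
      1 - (((1 : ℂ) - t) * z.1 + (t : ℂ) * z.2) * h z ≠ 0) ∧
    (∀ z : ℂ × ℂ, ‖z.1‖ < 1 → ‖z.2‖ < 1 →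
      ‖((t : ℂ) * z.1 + (1 - (t : ℂ)) * z.2 - z.1 * z.2 * h z) /
        (1 - (((1 : ℂ) - t) * z.1 + (t : ℂ) * z.2) * h z)‖ < 1) ∧
    (∀ w : ℂ, ‖w‖ < 1 →
      ((t : ℂ) * w + (1 - (t : ℂ)) * w - w * w * h (w, w)) /
        (1 - (((1 : ℂ) - t) * w + (t : ℂ) * w) * h (w, w)) = w) := by
  obtain ⟨ht0, ht1⟩ := ht
  have key : ∀ z : ℂ × ℂ, ‖z.1‖ < 1 → ‖z.2‖ < 1 →
      ‖(t : ℂ) * z.1 + (1 - (t : ℂ)) * z.2 - z.1 * z.2 * h z‖ <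
        ‖1 - (((1 : ℂ) - t) * z.1 + (t : ℂ) * z.2) * h z‖ := fun z h1 h2 =>
    key_ineq z.1 z.2 (h z) t ht0 ht1 h1 h2 (hbd z h1 h2)
  have hden : ∀ z : ℂ × ℂ, ‖z.1‖ < 1 → ‖z.2‖ < 1 →
      1 - (((1 : ℂ) - t) * z.1 + (t : ℂ) * z.2) * h z ≠ 0 := by
    intro z h1 h2
    have hk := key z h1 h2
    have hn := norm_nonneg ((t : ℂ) * z.1 + (1 - (t : ℂ)) * z.2 - z.1 * z.2 * h z)
    intro h0
    rw [h0, norm_zero] at hk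
    linarith
  refine ⟨hden, ?_, ?_⟩
  · intro z h1 h2
    rw [norm_div]
    have hk := key z h1 h2
    have hd0 : 0 < ‖1 - (((1 : ℂ) - t) * z.1 + (t : ℂ) * z.2) * h z‖ := by
      have := norm_nonneg ((t : ℂ) * z.1 + (1 - (t : ℂ)) * z.2 - z.1 * z.2 * h z)
      linarith
    rw [div_lt_one hd0]
    exact hk
  · intro w hw
    have hd := hden (w, w) hw hw
    have e : (t : ℂ) * w + (1 - (t : ℂ)) * w - w * w * h (w, w) =
        w * (1 - (((1 : ℂ) - t) * w + (t : ℂ) * w) * h (w, w)) := by ring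
    rw [e, mul_div_assoc, div_self hd, mul_one]
end

section
/- Let B(λ) = λ·(λ − α)/(1 − conj(α)·λ) with α ∈ 𝔻 \ {0}, and let σ ∈ 𝔻 \ {0}. Suppose φ : 𝔻 → 𝔻 is holomorphic with φ(0) = 0, φ(B(σ)) = σ² and φ(B(−σ)) = σ². Then a contradiction follows; i.e., no such φ exists. Equivalently, the three-point Nevanlinna–Pick problem (0,0)↦0, (B(σ),B(−σ))↦σ², (B(−σ),B(σ))↦σ² in the bidisc is strictly two-dimensional. -/
open Complex Metric Set

private lemma one_sub_ne {u : ℂ} (h : ‖u‖ < 1) : (1 : ℂ) - u ≠ 0 := by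
  intro h0
  have : u = 1 := by linear_combination -h0
  simp [this] at h

private lemma normSq_mobius_identity (a z : ℂ) :
    Complex.normSq (1 - (starRingEnd ℂ) a * z) - Complex.normSq (z - a)
      = (1 - Complex.normSq a) * (1 - Complex.normSq z) := by
  simp only [Complex.normSq_apply, Complex.sub_re, Complex.sub_im, Complex.mul_re,
    Complex.mul_im, Complex.one_re, Complex.one_im, Complex.conj_re, Complex.conj_im]
  ring

private lemma mobius_den_ne {a z : ℂ} (ha : ‖a‖ < 1) (hz : ‖z‖ ≤ 1) :
    (1 : ℂ) - (starRingEnd ℂ) a * z ≠ 0 := by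
  refine one_sub_ne ?_
  calc ‖(starRingEnd ℂ) a * z‖ = ‖a‖ * ‖z‖ := by rw [norm_mul, RCLike.norm_conj]
  _ ≤ ‖a‖ * 1 := by nlinarith [norm_nonneg a]
  _ < 1 := by nlinarith

private lemma mobius_le {a z : ℂ} (ha : ‖a‖ < 1) (hz : ‖z‖ ≤ 1) :
    ‖(z - a) / (1 - (starRingEnd ℂ) a * z)‖ ≤ 1 := by
  have hd := mobius_den_ne ha hz
  have hdpos : 0 < ‖(1 : ℂ) - (starRingEnd ℂ) a * z‖ := norm_pos_iff.mpr hd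
  rw [norm_div, div_le_one hdpos]
  have key := normSq_mobius_identity a z
  have h1 : Complex.normSq a < 1 := by
    rw [← Complex.sq_norm]; nlinarith [norm_nonneg a]
  have h2 : Complex.normSq z ≤ 1 := by
    rw [← Complex.sq_norm]; nlinarith [norm_nonneg z]
  have e1 := Complex.sq_norm (z - a)
  have e2 := Complex.sq_norm (1 - (starRingEnd ℂ) a * z)
  nlinarith [norm_nonneg (z - a), norm_nonneg (1 - (starRingEnd ℂ) a * z)]

private lemma mobius_lt {a z : ℂ} (ha : ‖a‖ < 1) (hz : ‖z‖ < 1) :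
    ‖(z - a) / (1 - (starRingEnd ℂ) a * z)‖ < 1 := by
  have hd := mobius_den_ne ha hz.le
  have hdpos : 0 < ‖(1 : ℂ) - (starRingEnd ℂ) a * z‖ := norm_pos_iff.mpr hd
  rw [norm_div, div_lt_one hdpos]
  have key := normSq_mobius_identity a z
  have h1 : Complex.normSq a < 1 := by
    rw [← Complex.sq_norm]; nlinarith [norm_nonneg a]
  have h2 : Complex.normSq z < 1 := by
    rw [← Complex.sq_norm]; nlinarith [norm_nonneg z]
  have e1 := Complex.sq_norm (z - a)
  have e2 := Complex.sq_norm (1 - (starRingEnd ℂ) a * z)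
  nlinarith [norm_nonneg (z - a), norm_nonneg (1 - (starRingEnd ℂ) a * z)]

private lemma mobius_inj {a x y : ℂ} (ha : ‖a‖ < 1)
    (hx : (1 : ℂ) - (starRingEnd ℂ) a * x ≠ 0) (hy : (1 : ℂ) - (starRingEnd ℂ) a * y ≠ 0)
    (h : (x - a) / (1 - (starRingEnd ℂ) a * x) = (y - a) / (1 - (starRingEnd ℂ) a * y)) :
    x = y := by
  rw [div_eq_div_iff hx hy] at h
  have hne : (1 : ℂ) - (starRingEnd ℂ) a * a ≠ 0 := by
    refine one_sub_ne ?_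
    rw [norm_mul, RCLike.norm_conj]; nlinarith [norm_nonneg a]
  have h2 : (x - y) * (1 - (starRingEnd ℂ) a * a) = 0 := by linear_combination h
  rcases mul_eq_zero.1 h2 with h3 | h3
  · linear_combination h3
  · exact absurd h3 hne

/-- Let `B(w) = w(w − α)/(1 − conj(α) w)` with `α ∈ 𝔻 \ {0}` and let
`σ ∈ 𝔻 \ {0}`. There is no holomorphic `φ : 𝔻 → 𝔻` with `φ(0) = 0`,
`φ(B(σ)) = σ²` and `φ(B(−σ)) = σ²`; i.e. the corresponding three-point
Nevanlinna–Pick problem in the bidisc is strictly two-dimensional. -/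
theorem no_one_dimensional_solution (α σ : ℂ)
    (hα : ‖α‖ < 1) (hα0 : α ≠ 0) (hσ : ‖σ‖ < 1) (hσ0 : σ ≠ 0)
    (φ : ℂ → ℂ)
    (hhol : DifferentiableOn ℂ φ {z : ℂ | ‖z‖ < 1})
    (hmaps : ∀ z : ℂ, ‖z‖ < 1 → ‖φ z‖ < 1)
    (h0 : φ 0 = 0)
    (h1 : φ (σ * (σ - α) / (1 - (starRingEnd ℂ) α * σ)) = σ ^ 2)
    (h2 : φ ((-σ) * (-σ - α) / (1 - (starRingEnd ℂ) α * (-σ))) = σ ^ 2) :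
    False := by
  set D : Set ℂ := Metric.ball (0 : ℂ) 1 with hD
  have hmemD : ∀ z : ℂ, z ∈ D ↔ ‖z‖ < 1 := fun z => mem_ball_zero_iff
  have h0D : (0 : ℂ) ∈ D := (hmemD 0).2 (by simp)
  have hDnhds : D ∈ nhds (0 : ℂ) := isOpen_ball.mem_nhds h0D
  -- the Blaschke product
  set B : ℂ → ℂ := fun z => z * (z - α) / (1 - (starRingEnd ℂ) α * z) with hBdef
  have hBmaps : ∀ z ∈ D, B z ∈ D := by
    intro z hz
    rw [hmemD] at hz ⊢
    have hBz : B z = z * ((z - α) / (1 - (starRingEnd ℂ) α * z)) := mul_div_assoc _ _ _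
    rw [hBz, norm_mul]
    have hm := mobius_lt hα hz
    nlinarith [norm_nonneg z, norm_nonneg ((z - α) / (1 - (starRingEnd ℂ) α * z))]
  have hBd : DifferentiableOn ℂ B D := by
    intro z hz
    have hden := mobius_den_ne hα ((hmemD z).1 hz).le
    exact ((differentiableAt_id.mul (differentiableAt_id.sub (differentiableAt_const α))).div
      ((differentiableAt_const 1).sub ((differentiableAt_const _).mul differentiableAt_id))
      hden).differentiableWithinAt
  -- g = φ ∘ B
  set g : ℂ → ℂ := fun z => φ (B z) with hgdef
  have hgd : DifferentiableOn ℂ g D :=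
    hhol.comp hBd (fun z hz => (hmemD _).1 (hBmaps z hz))
  have hg0 : g 0 = 0 := by simp [hgdef, hBdef, h0]
  have hgσ : g σ = σ ^ 2 := by simpa [hgdef, hBdef] using h1
  have hgmσ : g (-σ) = σ ^ 2 := by simpa [hgdef, hBdef] using h2
  have hgα : g α = 0 := by simp [hgdef, hBdef, h0]
  -- ψ = dslope g 0 : self-map of the closed disc with ψ σ = σ, ψ (-σ) = -σ, ψ α = 0
  set ψ : ℂ → ℂ := dslope g 0 with hψdef
  have hψd : DifferentiableOn ℂ ψ D := (differentiableOn_dslope hDnhds).mpr hgd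
  have hψle : ∀ z ∈ D, ‖ψ z‖ ≤ 1 := by
    intro z hz
    have hgm : Set.MapsTo g D (Metric.ball (g 0) 1) := by
      intro w hw
      rw [hg0, mem_ball_zero_iff]
      exact hmaps _ ((hmemD _).1 (hBmaps w hw))
    simpa using Complex.norm_dslope_le_div_of_mapsTo_ball hgd (hgm.mono_right ball_subset_closedBall) hz
  have hψσ : ψ σ = σ := by
    rw [hψdef, dslope_of_ne _ hσ0, slope_def_field, hgσ, hg0]
    field_simp; ring
  have hψmσ : ψ (-σ) = -σ := by
    rw [hψdef, dslope_of_ne _ (neg_ne_zero.mpr hσ0), slope_def_field, hgmσ, hg0, sub_zero,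
      sub_zero, div_eq_iff (neg_ne_zero.mpr hσ0)]
    ring
  have hψα : ψ α = 0 := by
    rw [hψdef, dslope_of_ne _ hα0, slope_def_field, hgα, hg0]
    simp
  -- Möbius automorphism Φ and its inverse
  set Φ : ℂ → ℂ := fun w => (w - σ) / (1 - (starRingEnd ℂ) σ * w) with hΦdef
  set Φi : ℂ → ℂ := fun w => (w - (-σ)) / (1 - (starRingEnd ℂ) (-σ) * w) with hΦidef
  have hσn : ‖-σ‖ < 1 := by simpa using hσ
  have hΦle : ∀ w : ℂ, ‖w‖ ≤ 1 → ‖Φ w‖ ≤ 1 := fun w hw => mobius_le hσ hw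
  have hΦlt : ∀ w : ℂ, ‖w‖ < 1 → ‖Φ w‖ < 1 := fun w hw => mobius_lt hσ hw
  have hΦilt : ∀ w : ℂ, ‖w‖ < 1 → ‖Φi w‖ < 1 := fun w hw => mobius_lt hσn hw
  have hΦinj : ∀ x y : ℂ, ‖x‖ ≤ 1 → ‖y‖ ≤ 1 → Φ x = Φ y → x = y := fun x y hx hy h =>
    mobius_inj hσ (mobius_den_ne hσ hx) (mobius_den_ne hσ hy) h
  have hΦσ : Φ σ = 0 := by simp [hΦdef]
  have hinv : ∀ w : ℂ, ‖w‖ ≤ 1 → Φi (Φ w) = w := by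
    intro w hw
    have hd : (1 : ℂ) - (starRingEnd ℂ) σ * w ≠ 0 := mobius_den_ne hσ hw
    have hd2 : (1 : ℂ) - (starRingEnd ℂ) (-σ) * Φ w ≠ 0 :=
      mobius_den_ne hσn (hΦle w hw)
    rw [hΦdef] at hd2
    simp only [hΦidef, hΦdef]
    rw [div_eq_iff hd2]
    have hd' : (1 : ℂ) - w * (starRingEnd ℂ) σ ≠ 0 := by rwa [mul_comm]
    field_simp
    simp only [map_neg]
    ring
  -- F = Φ ∘ ψ ∘ Φi
  set F : ℂ → ℂ := fun z => Φ (ψ (Φi z)) with hFdef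
  have hFd : DifferentiableOn ℂ F D := by
    have hΦd : DifferentiableOn ℂ Φ {w : ℂ | ‖w‖ ≤ 1} := by
      intro w hw
      have hden := mobius_den_ne hσ hw
      exact ((differentiableAt_id.sub (differentiableAt_const σ)).div
        ((differentiableAt_const 1).sub ((differentiableAt_const _).mul differentiableAt_id))
        hden).differentiableWithinAt
    have hΦid : DifferentiableOn ℂ Φi D := by
      intro w hw
      have hden := mobius_den_ne hσn ((hmemD w).1 hw).le
      exact ((differentiableAt_id.sub (differentiableAt_const (-σ))).div
        ((differentiableAt_const 1).sub ((differentiableAt_const _).mul differentiableAt_id))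
        hden).differentiableWithinAt
    exact (hΦd.comp hψd fun z hz => hψle z hz).comp hΦid
      (fun z hz => (hmemD _).2 (hΦilt z ((hmemD z).1 hz)))
  have hFle : ∀ z ∈ D, ‖F z‖ ≤ 1 :=
    fun z hz => hΦle _ (hψle _ ((hmemD _).2 (hΦilt z ((hmemD z).1 hz))))
  have hΦi0 : Φi 0 = σ := by simp [hΦidef]
  have hF0 : F 0 = 0 := by rw [hFdef]; simp only []; rw [hΦi0, hψσ, hΦσ]
  -- the point c = Φ (-σ)
  set c : ℂ := Φ (-σ) with hcdef
  have hcD : c ∈ D := (hmemD _).2 (hΦlt _ hσn)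
  have hc0 : c ≠ 0 := by
    intro h
    have : (-σ : ℂ) = σ := hΦinj _ _ (by simpa using hσ.le) hσ.le (by rw [← hcdef, h, hΦσ])
    apply hσ0
    have := this
    linear_combination (-1/2 : ℂ) * this
  have hFc : F c = c := by
    rw [hFdef]; simp only []
    rw [hcdef, hinv _ hσn.le, hψmσ]
  -- k = dslope F 0
  set k : ℂ → ℂ := dslope F 0 with hkdef
  have hkd : DifferentiableOn ℂ k D := (differentiableOn_dslope hDnhds).mpr hFd
  have hkle : ∀ z ∈ D, ‖k z‖ ≤ 1 := by
    intro z hz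
    refine le_of_forall_pos_le_add fun ε hε => ?_
    have hFm : Set.MapsTo F D (Metric.ball (F 0) (1 + ε)) := by
      intro w hw
      rw [hF0, mem_ball_zero_iff]
      exact lt_of_le_of_lt (hFle w hw) (by linarith)
    have := Complex.norm_dslope_le_div_of_mapsTo_ball hFd (hFm.mono_right ball_subset_closedBall) hz
    simpa using this
  have hkc : k c = 1 := by
    rw [hkdef, dslope_of_ne _ hc0, slope_def_field, hFc, hF0]
    field_simp
  have hmax : IsMaxOn (norm ∘ k) D c := by
    intro z hz
    simp only [Function.comp_apply, hkc, norm_one]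
    exact hkle z hz
  have heq := Complex.eqOn_of_isPreconnected_of_isMaxOn_norm
    (convex_ball (0 : ℂ) 1).isPreconnected isOpen_ball hkd hcD hmax
  -- evaluate at Φ α
  have hΦαD : Φ α ∈ D := (hmemD _).2 (hΦlt _ hα)
  have hkΦα : k (Φ α) = 1 := by
    have := heq hΦαD
    simpa [Function.const, hkc] using this
  have hFΦα : F (Φ α) = Φ α := by
    have hs := sub_smul_dslope F 0 (Φ α)
    rw [← hkdef] at hs
    have : (Φ α - 0) • k (Φ α) = F (Φ α) - F 0 := hs
    rw [hkΦα, hF0] at this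
    simpa using this.symm
  have hFΦα' : F (Φ α) = Φ 0 := by
    rw [hFdef]; simp only []
    rw [hinv _ hα.le, hψα]
  have : α = 0 := hΦinj _ _ hα.le (by simp) (by rw [← hFΦα, hFΦα'])
  exact hα0 this
end

section
/- Let a(λ) = τ·(λ − α)/(1 − conj(α)·λ) be a Möbius self-map of 𝔻 with |τ| = 1 and α ∈ 𝔻. Then a(λ) ≠ λ for every λ ∈ 𝔻 if and only if |1 − τ| ≤ 2|α|. -/
open Complex

set_option maxHeartbeats 1000000

/-- A non-identity Möbius self-map `a(w) = τ(w − α)/(1 − conj(α) w)` of the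
unit disc (|τ| = 1, α ∈ 𝔻) is fixed-point free on 𝔻 if and only if
`|1 − τ| ≤ 2|α|`. -/
theorem fixed_point_free_iff (τ α : ℂ) (hτ : ‖τ‖ = 1) (hα : ‖α‖ < 1)
    (hnontriv : ¬(τ = 1 ∧ α = 0)) :
    (∀ w : ℂ, ‖w‖ < 1 → τ * (w - α) / (1 - (starRingEnd ℂ) α * w) ≠ w) ↔
      ‖1 - τ‖ ≤ 2 * ‖α‖ := by
  obtain ⟨s, hs2⟩ := IsAlgClosed.exists_pow_nat_eq τ (n := 2) (by norm_num)
  have hns : ‖s‖ = 1 := by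
    have h : ‖s‖ ^ 2 = 1 := by rw [← norm_pow, hs2, hτ]
    nlinarith [norm_nonneg s]
  set σ : ℝ := s.im with hσdef
  have hss : s * (starRingEnd ℂ) s = 1 := by
    rw [Complex.mul_conj]
    norm_cast
    rw [Complex.normSq_eq_norm_sq, hns, one_pow]
  have hsub : s - (starRingEnd ℂ) s = 2 * (σ : ℂ) * I := by
    rw [Complex.sub_conj]; push_cast; ring
  have hnorm1τ : ‖1 - τ‖ = 2 * |σ| := by
    have h1 : 1 - τ = s * ((starRingEnd ℂ) s - s) := by
      rw [← hs2]; linear_combination -hss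
    rw [h1, norm_mul, hns, one_mul]
    have h2 : (starRingEnd ℂ) s - s = -(2 * (σ : ℂ) * I) := by
      rw [← hsub]; ring
    rw [h2, norm_neg]
    simp [norm_mul, Complex.norm_real, abs_mul]
  have hI : (I : ℂ) ^ 2 = -1 := Complex.I_sq
  constructor
  · -- fixed point free → condition, by contrapositive
    intro hall
    by_contra hgt
    push_neg at hgt
    rw [hnorm1τ] at hgt
    have hασ : ‖α‖ < |σ| := by linarith
    rcases eq_or_ne α 0 with rfl | hα0
    · exact hall 0 (by norm_num) (by simp)
    · have hαpos : 0 < ‖α‖ := norm_pos_iff.mpr hα0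
      set c : ℝ := Real.sqrt (σ ^ 2 - ‖α‖ ^ 2) with hcdef
      have hc2 : c ^ 2 = σ ^ 2 - ‖α‖ ^ 2 := Real.sq_sqrt (by nlinarith [_root_.sq_abs σ, abs_nonneg σ])
      have hcnn : 0 ≤ c := Real.sqrt_nonneg _
      set e : ℝ := if 0 ≤ σ then 1 else -1 with hedef
      have heσ : e * σ = |σ| := by
        rw [hedef]; split
        · rw [one_mul, _root_.abs_of_nonneg ‹_›]
        · rw [_root_.abs_of_neg (by linarith [not_le.mp ‹¬0 ≤ σ›])]; ring
      have he2 : e ^ 2 = 1 := by rw [hedef]; split <;> norm_num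
      set t : ℝ := -σ + e * c with htdef
      have ht : t ^ 2 + 2 * σ * t + ‖α‖ ^ 2 = 0 := by
        rw [htdef]; linear_combination hc2 + c ^ 2 * he2
      have ht2 : t ^ 2 = (|σ| - c) ^ 2 := by
        rw [htdef]; linear_combination (-2 * c) * heσ + c ^ 2 * he2 - _root_.sq_abs σ
      have htlt : |t| < ‖α‖ := by
        have hclt : c < |σ| := by nlinarith [abs_nonneg σ]
        have hcpos : 0 < c := by nlinarith [_root_.sq_abs σ]
        have hprod : (|σ| - c) * (|σ| + c) = ‖α‖ ^ 2 := by
          linear_combination _root_.sq_abs σ - hc2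
        have : (|σ| - c) ^ 2 < ‖α‖ ^ 2 := by
          nlinarith [mul_pos hcpos (sub_pos.mpr hclt)]
        nlinarith [_root_.sq_abs t, abs_nonneg t]
      have hαc0 : (starRingEnd ℂ) α ≠ 0 := by
        simpa using hα0
      set w₀ : ℂ := s * I * (t : ℂ) / (starRingEnd ℂ) α with hw0def
      have hw0 : (starRingEnd ℂ) α * w₀ = s * I * (t : ℂ) := by
        rw [hw0def]; field_simp
      have hnw0 : ‖w₀‖ < 1 := by
        rw [hw0def]
        rw [norm_div, norm_mul, norm_mul, hns, Complex.norm_I, Complex.norm_real,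
          Real.norm_eq_abs, RCLike.norm_conj]
        rw [div_lt_one hαpos]; simpa using htlt
      refine hall w₀ hnw0 ?_
      have hd0 : 1 - (starRingEnd ℂ) α * w₀ ≠ 0 := by
        intro h
        have h1 : (starRingEnd ℂ) α * w₀ = 1 := by linear_combination -h
        have := congrArg norm h1
        rw [norm_mul, RCLike.norm_conj, norm_one] at this
        have h2 : ‖α‖ * ‖w₀‖ < 1 * 1 :=
          mul_lt_mul'' hα hnw0 (norm_nonneg α) (norm_nonneg w₀)
        rw [this] at h2; norm_num at h2
      rw [div_eq_iff hd0]
      have hτ1 : τ - 1 = 2 * (σ : ℂ) * I * s := by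
        linear_combination -hs2 + s * hsub + hss
      have hαα : α * (starRingEnd ℂ) α = ((‖α‖ : ℂ)) ^ 2 := by
        rw [mul_comm, Complex.conj_mul']; try norm_cast
      have htC : (t : ℂ) ^ 2 + 2 * (σ : ℂ) * (t : ℂ) + ((‖α‖ : ℂ)) ^ 2 = 0 := by
        exact_mod_cast congrArg (fun x : ℝ => (x : ℂ)) ht
      have hbig : ((starRingEnd ℂ) α * (starRingEnd ℂ) α) * (τ * (w₀ - α)) =
          ((starRingEnd ℂ) α * (starRingEnd ℂ) α) * (w₀ * (1 - (starRingEnd ℂ) α * w₀)) := by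
        linear_combination ((starRingEnd ℂ) α * (τ - 1 + (starRingEnd ℂ) α * w₀ + s * I * (t : ℂ))) * hw0
          + ((starRingEnd ℂ) α * s * I * (t : ℂ)) * hτ1
          - ((starRingEnd ℂ) α * τ) * hαα
          - ((starRingEnd ℂ) α * s ^ 2) * htC
          + ((starRingEnd ℂ) α * s ^ 2 * (t : ℂ) * (2 * (σ : ℂ) + (t : ℂ))) * hI
          + ((starRingEnd ℂ) α * ((‖α‖ : ℂ)) ^ 2) * hs2
      exact mul_left_cancel₀ (mul_ne_zero hαc0 hαc0) hbig
  · -- condition → fixed point free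
    intro hle w hw hfix
    have hα0 : α ≠ 0 := by
      rintro rfl
      simp only [norm_zero, mul_zero] at hle
      have h1 : ‖1 - τ‖ = 0 := le_antisymm hle (norm_nonneg _)
      have : τ = 1 := by
        have := norm_eq_zero.mp h1; linear_combination -this
      exact hnontriv ⟨this, rfl⟩
    have hαpos : 0 < ‖α‖ := norm_pos_iff.mpr hα0
    have hσα : |σ| ≤ ‖α‖ := by rw [hnorm1τ] at hle; linarith
    set r : ℝ := Real.sqrt (‖α‖ ^ 2 - σ ^ 2) with hrdef
    have hr2 : r ^ 2 = ‖α‖ ^ 2 - σ ^ 2 := Real.sq_sqrt (by nlinarith [_root_.sq_abs σ, abs_nonneg σ])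
    have hd : 1 - (starRingEnd ℂ) α * w ≠ 0 := by
      intro h
      have h1 : (starRingEnd ℂ) α * w = 1 := by linear_combination -h
      have := congrArg norm h1
      rw [norm_mul, RCLike.norm_conj, norm_one] at this
      have h2 : ‖α‖ * ‖w‖ < 1 * 1 :=
        mul_lt_mul'' hα hw (norm_nonneg α) (norm_nonneg w)
      rw [this] at h2; norm_num at h2
    rw [div_eq_iff hd] at hfix
    have hαα : α * (starRingEnd ℂ) α = ((‖α‖ : ℂ)) ^ 2 := by
      rw [mul_comm, Complex.conj_mul']; try norm_cast
    have hr2c : ((r : ℂ)) ^ 2 = ((‖α‖ : ℂ)) ^ 2 - ((σ : ℂ)) ^ 2 := by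
      exact_mod_cast congrArg (fun x : ℝ => (x : ℂ)) hr2
    have key : ((starRingEnd ℂ) α * w - s * ((r : ℂ) - (σ : ℂ) * I)) *
        ((starRingEnd ℂ) α * w - s * (-(r : ℂ) - (σ : ℂ) * I)) = 0 := by
      linear_combination ((starRingEnd ℂ) α) * hfix
        + ((starRingEnd ℂ) α * w - ((‖α‖ : ℂ)) ^ 2) * hs2
        - (s * (starRingEnd ℂ) α * w) * hsub
        - ((starRingEnd ℂ) α * w) * hss
        + τ * hαα
        - s ^ 2 * hr2c
        + s ^ 2 * ((σ : ℂ)) ^ 2 * hI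
    have hnormc : ∀ x : ℝ, ‖(x : ℂ) - (σ : ℂ) * I‖ = Real.sqrt (x ^ 2 + σ ^ 2) := by
      intro x
      have : (x : ℂ) - (σ : ℂ) * I = (x : ℝ) + (-σ : ℝ) * I := by push_cast; ring
      rw [this, Complex.norm_add_mul_I]
      ring_nf
    have hsqrt : Real.sqrt (r ^ 2 + σ ^ 2) = ‖α‖ := by
      rw [show r ^ 2 + σ ^ 2 = ‖α‖ ^ 2 by linarith]
      exact Real.sqrt_sq (norm_nonneg α)
    rcases mul_eq_zero.mp key with h | h
    · have h1 : (starRingEnd ℂ) α * w = s * ((r : ℂ) - (σ : ℂ) * I) := by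
        linear_combination h
      have := congrArg norm h1
      rw [norm_mul, norm_mul, RCLike.norm_conj, hns, one_mul, hnormc, hsqrt] at this
      nlinarith
    · have h1 : (starRingEnd ℂ) α * w = s * (-(r : ℂ) - (σ : ℂ) * I) := by
        linear_combination h
      have h2 : ‖-(r : ℂ) - (σ : ℂ) * I‖ = ‖α‖ := by
        have : -(r : ℂ) - (σ : ℂ) * I = ((-r : ℝ) : ℂ) - (σ : ℂ) * I := by push_cast; ring
        rw [this, hnormc]
        rw [show (-r) ^ 2 + σ ^ 2 = r ^ 2 + σ ^ 2 by ring]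
        exact hsqrt
      have := congrArg norm h1
      rw [norm_mul, norm_mul, RCLike.norm_conj, hns, one_mul, h2] at this
      nlinarith
end

section
/- Let σ ∈ 𝕋 with σ ≠ ±1, β ∈ 𝔻 \ {0} with |1 − σ| = 2|β|, and let b(λ) = σ·(λ − β)/(1 − conj(β)·λ). Suppose t ∈ [0,1], h is holomorphic on 𝔻² with |h| ≤ 1, and G(z₁,z₂) = (t·z₁ + (1−t)·b(z₂) − z₁·b(z₂)·h(z₁,z₂)) / (1 − ((1−t)·z₁ + t·b(z₂))·h(z₁,z₂)) satisfies G(λ, b⁻¹(λ)) = λ for all λ ∈ 𝔻 and G is symmetric (G(z₁,z₂) = G(z₂,z₁)). Then t = 1/2 and h is the constant (σ − 1)/(2σβ), which has modulus 1. -/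
set_option maxHeartbeats 800000 in
/-- Uniqueness step for left inverses in the symmetrized bidisc (boundary
tangency case). Let `b(w) = σ(w − β)/(1 − conj(β) w)` be a fixed-point free
automorphism of 𝔻 whose fixed-point equation has a double root on the circle
(`|1 − σ| = 2|β|`, σ ∈ 𝕋 \ {±1}, β ∈ 𝔻 \ {0}). If `t ∈ [0,1]`, `h` is
holomorphic on 𝔻² with `|h| ≤ 1`, and the function
`G(z₁,z₂) = (t z₁ + (1−t) b(z₂) − z₁ b(z₂) h(z₁,z₂)) / (1 − ((1−t) z₁ + t b(z₂)) h(z₁,z₂))`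
is symmetric and satisfies `G(w, b⁻¹(w)) = w` on 𝔻, then `t = 1/2` and `h` is
the unimodular constant `(σ − 1)/(2σβ)`. -/
theorem unique_left_inverse_symmetrized_bidisc (σ β : ℂ)
    (hσ : ‖σ‖ = 1) (hσ1 : σ ≠ 1) (hσ2 : σ ≠ -1)
    (hβ : ‖β‖ < 1) (hβ0 : β ≠ 0) (htan : ‖1 - σ‖ = 2 * ‖β‖)
    (t : ℝ) (ht : t ∈ Set.Icc (0 : ℝ) 1)
    (h : ℂ × ℂ → ℂ)
    (hhol : DifferentiableOn ℂ h {z : ℂ × ℂ | ‖z.1‖ < 1 ∧ ‖z.2‖ < 1})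
    (hbd : ∀ z : ℂ × ℂ, ‖z.1‖ < 1 → ‖z.2‖ < 1 → ‖h z‖ ≤ 1)
    (G : ℂ × ℂ → ℂ)
    (hG : ∀ z : ℂ × ℂ, ‖z.1‖ < 1 → ‖z.2‖ < 1 →
      G z = ((t : ℂ) * z.1 + (1 - (t : ℂ)) * (σ * (z.2 - β) / (1 - (starRingEnd ℂ) β * z.2)) -
              z.1 * (σ * (z.2 - β) / (1 - (starRingEnd ℂ) β * z.2)) * h z) /
            (1 - ((1 - (t : ℂ)) * z.1 +
              (t : ℂ) * (σ * (z.2 - β) / (1 - (starRingEnd ℂ) β * z.2))) * h z))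
    (hsym : ∀ z₁ z₂ : ℂ, ‖z₁‖ < 1 → ‖z₂‖ < 1 → G (z₁, z₂) = G (z₂, z₁))
    (hleft : ∀ w : ℂ, ‖w‖ < 1 →
      G (w, (w + σ * β) / (σ + (starRingEnd ℂ) β * w)) = w) :
    t = 1 / 2 ∧
      (∀ z : ℂ × ℂ, ‖z.1‖ < 1 → ‖z.2‖ < 1 → h z = (σ - 1) / (2 * σ * β)) ∧
      ‖(σ - 1) / (2 * σ * β)‖ = 1 := by
  obtain ⟨ht0, ht1⟩ := ht
  have hβ' : (0:ℝ) < ‖β‖ := norm_pos_iff.mpr hβ0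
  have hσ0 : σ ≠ 0 := by
    intro hs
    rw [hs, norm_zero] at hσ
    norm_num at hσ
  have h0 : ‖(0:ℂ)‖ < 1 := by norm_num
  set hv := h (β, 0) with hhv
  have hvbd : ‖hv‖ ≤ 1 := hbd (β, 0) hβ h0
  -- G (0, β) = 0
  have hG1 : G (0, β) = 0 := by
    rw [hG (0, β) h0 hβ]
    simp
  -- G (β, 0) in closed form
  have hB0 : σ * ((0:ℂ) - β) / (1 - (starRingEnd ℂ) β * 0) = -(σ * β) := by
    rw [mul_zero, sub_zero, div_one, zero_sub]
    ring
  have hG2 : G (β, 0) =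
      ((t : ℂ) * β + (1 - (t : ℂ)) * (-(σ * β)) - β * (-(σ * β)) * hv) /
        (1 - ((1 - (t : ℂ)) * β + (t : ℂ) * (-(σ * β))) * hv) := by
    have h2 := hG (β, 0) hβ h0
    rw [show ((β, (0:ℂ)).2 : ℂ) = 0 from rfl, show ((β, (0:ℂ)).1 : ℂ) = β from rfl,
      hB0] at h2
    exact h2
  -- denominator is nonzero
  have hwle : ‖(1 - (t : ℂ)) * β + (t : ℂ) * (-(σ * β))‖ ≤ ‖β‖ := by
    have e1 : ‖(1 - (t : ℂ)) * β‖ = (1 - t) * ‖β‖ := by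
      rw [show (1 - (t : ℂ)) = ((1 - t : ℝ) : ℂ) by push_cast; ring,
        norm_mul, Complex.norm_real, Real.norm_eq_abs, abs_of_nonneg (by linarith : (0:ℝ) ≤ 1 - t)]
    have e2 : ‖(t : ℂ) * (-(σ * β))‖ = t * ‖β‖ := by
      rw [norm_mul, norm_neg, norm_mul, hσ, one_mul, Complex.norm_real,
        Real.norm_eq_abs, abs_of_nonneg ht0]
    calc ‖(1 - (t : ℂ)) * β + (t : ℂ) * (-(σ * β))‖
        ≤ ‖(1 - (t : ℂ)) * β‖ + ‖(t : ℂ) * (-(σ * β))‖ := norm_add_le _ _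
      _ = ‖β‖ := by rw [e1, e2]; ring
  have hden : (1 : ℂ) - ((1 - (t : ℂ)) * β + (t : ℂ) * (-(σ * β))) * hv ≠ 0 := by
    intro hd
    have h1 : (1 : ℂ) = ((1 - (t : ℂ)) * β + (t : ℂ) * (-(σ * β))) * hv :=
      by linear_combination hd
    have h2 : (1 : ℝ) ≤ ‖β‖ := by
      calc (1:ℝ) = ‖(1:ℂ)‖ := by norm_num
        _ = ‖((1 - (t : ℂ)) * β + (t : ℂ) * (-(σ * β))) * hv‖ := by rw [← h1]
        _ ≤ ‖(1 - (t : ℂ)) * β + (t : ℂ) * (-(σ * β))‖ * ‖hv‖ := norm_mul_le _ _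
        _ ≤ ‖β‖ * 1 := by
            apply mul_le_mul hwle hvbd (norm_nonneg _) (norm_nonneg _)
        _ = ‖β‖ := mul_one _
    linarith
  -- numerator vanishes
  have hGval : G (β, 0) = 0 := (hsym β 0 hβ h0).trans hG1
  have hnum : (t : ℂ) * β + (1 - (t : ℂ)) * (-(σ * β)) - β * (-(σ * β)) * hv = 0 := by
    rw [hG2] at hGval
    rcases div_eq_zero_iff.mp hGval with hn | hd
    · exact hn
    · exact absurd hd hden
  have key : σ * β * hv = (1 - (t : ℂ)) * σ - (t : ℂ) := by
    have hkey : β * (σ * β * hv - ((1 - (t : ℂ)) * σ - (t : ℂ))) = 0 := by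
      linear_combination hnum
    rcases mul_eq_zero.mp hkey with hb | hz
    · exact absurd hb hβ0
    · linear_combination hz
  -- the norm inequality forcing t = 1/2
  have hkn : ‖(1 - (t : ℂ)) * σ - (t : ℂ)‖ ≤ ‖β‖ := by
    calc ‖(1 - (t : ℂ)) * σ - (t : ℂ)‖ = ‖σ * β * hv‖ := by rw [key]
      _ = ‖β‖ * ‖hv‖ := by rw [norm_mul, norm_mul, hσ, one_mul]
      _ ≤ ‖β‖ * 1 := by
          exact mul_le_mul_of_nonneg_left hvbd (norm_nonneg _)
      _ = ‖β‖ := mul_one _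
  have hs2 : σ.re * σ.re + σ.im * σ.im = 1 := by
    have h1 := Complex.sq_norm σ
    rw [hσ] at h1
    simpa [Complex.normSq_apply] using h1.symm
  have hσre : -1 < σ.re := by
    by_contra hcon
    push_neg at hcon
    have him : σ.im = 0 := by nlinarith [sq_nonneg σ.im, sq_nonneg (σ.re + 1)]
    have hre : σ.re = -1 := by nlinarith
    exact hσ2 (Complex.ext (by simpa using hre) (by simpa using him))
  have hx2 : ‖(1 - (t : ℂ)) * σ - (t : ℂ)‖ ^ 2
      = ((1 - t) * σ.re - t) ^ 2 + ((1 - t) * σ.im) ^ 2 := by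
    rw [show ‖(1 - (t : ℂ)) * σ - (t : ℂ)‖ ^ 2
        = Complex.normSq ((1 - (t : ℂ)) * σ - (t : ℂ)) by
      rw [Complex.sq_norm]]
    simp [Complex.normSq_apply, Complex.sub_re, Complex.sub_im, Complex.mul_re,
      Complex.mul_im, Complex.one_re, Complex.one_im, Complex.ofReal_re,
      Complex.ofReal_im]
    ring
  have hb2 : ‖β‖ ^ 2 = ((1 - σ.re) ^ 2 + σ.im ^ 2) / 4 := by
    have h1 : ‖β‖ = ‖1 - σ‖ / 2 := by rw [htan]; ring
    have h2 : ‖(1 : ℂ) - σ‖ ^ 2 = Complex.normSq (1 - σ) := by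
      rw [Complex.sq_norm]
    rw [h1, div_pow, h2]
    simp [Complex.normSq_apply, Complex.sub_re, Complex.sub_im, Complex.one_re,
      Complex.one_im]
    ring
  have hsqle : ‖(1 - (t : ℂ)) * σ - (t : ℂ)‖ ^ 2 ≤ ‖β‖ ^ 2 :=
    pow_le_pow_left₀ (norm_nonneg _) hkn 2
  rw [hx2, hb2] at hsqle
  have ht2sq : (2 * t - 1) ^ 2 ≤ 0 := by nlinarith [hsqle, hs2, hσre]
  have ht2 : t = 1 / 2 := by nlinarith [sq_nonneg (2 * t - 1)]
  have htc : (t : ℂ) = 1 / 2 := by rw [ht2]; norm_num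
  -- value of h at (β, 0)
  have hvval : hv = (σ - 1) / (2 * σ * β) := by
    rw [htc] at key
    field_simp
    linear_combination 2 * key
  -- the constant has norm one
  have hnorm : ‖(σ - 1) / (2 * σ * β)‖ = 1 := by
    rw [norm_div, norm_mul, norm_mul, hσ, show ‖σ - 1‖ = ‖1 - σ‖ from norm_sub_rev σ 1,
      htan, show ‖(2:ℂ)‖ = 2 by norm_num]
    have habs : ‖β‖ ≠ 0 := norm_ne_zero_iff.mpr hβ0
    field_simp
  have hvnorm : ‖hv‖ = 1 := by rw [hvval, hnorm]
  -- maximum modulus principle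
  set U : Set (ℂ × ℂ) := {z : ℂ × ℂ | ‖z.1‖ < 1 ∧ ‖z.2‖ < 1} with hU
  have hUeq : U = Metric.ball (0 : ℂ × ℂ) 1 := by
    ext z
    simp [hU, Metric.mem_ball, dist_zero_right, Prod.norm_def, max_lt_iff]
  have hUopen : IsOpen U := by rw [hUeq]; exact Metric.isOpen_ball
  have hUpre : IsPreconnected U := by
    rw [hUeq]; exact (convex_ball (0 : ℂ × ℂ) 1).isPreconnected
  have hmem : (β, (0:ℂ)) ∈ U := ⟨hβ, h0⟩
  have hmax : IsMaxOn (norm ∘ h) U (β, 0) := by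
    intro z hz
    have : ‖h z‖ ≤ 1 := hbd z hz.1 hz.2
    show ‖h z‖ ≤ ‖h (β, 0)‖
    rw [← hhv, hvnorm]
    exact this
  have heq := Complex.eqOn_of_isPreconnected_of_isMaxOn_norm hUpre hUopen hhol hmem hmax
  refine ⟨ht2, ?_, hnorm⟩
  intro z hz1 hz2
  have := heq (show z ∈ U from ⟨hz1, hz2⟩)
  exact this.trans hvval
end

section
/- Let σ ∈ 𝕋, β ∈ 𝔻 \ {0}, t ∈ [0,1], and suppose h : 𝔻² → closure(𝔻) is holomorphic and satisfies t − (1 − t)·σ + σ·β·h(β, 0) = 0 where |1 − σ| = 2|β|. Then |h(β,0)| = |t − (1−t)σ|/|β| ≥ |1 − σ|/(2|β|) = 1, with equality forcing t = 1/2; hence by the maximum principle h is a unimodular constant. -/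
/-- Let σ ∈ 𝕋, β ∈ 𝔻 \ {0} with `|1 − σ| = 2|β|`, `t ∈ [0,1]`, and let
`h : 𝔻² → closure(𝔻)` be holomorphic with `t − (1 − t)σ + σ β h(β,0) = 0`.
Then `|h(β,0)| = 1`, `t = 1/2`, and by the maximum principle `h` is a
unimodular constant on 𝔻². -/
theorem h_is_unimodular_constant (σ β : ℂ)
    (hσ : ‖σ‖ = 1) (hβ : ‖β‖ < 1) (hβ0 : β ≠ 0)
    (htan : ‖1 - σ‖ = 2 * ‖β‖)
    (t : ℝ) (ht : t ∈ Set.Icc (0 : ℝ) 1)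
    (h : ℂ × ℂ → ℂ)
    (hhol : DifferentiableOn ℂ h {z : ℂ × ℂ | ‖z.1‖ < 1 ∧ ‖z.2‖ < 1})
    (hbd : ∀ z : ℂ × ℂ, ‖z.1‖ < 1 → ‖z.2‖ < 1 → ‖h z‖ ≤ 1)
    (heq : (t : ℂ) - (1 - (t : ℂ)) * σ + σ * β * h (β, 0) = 0) :
    ‖h (β, 0)‖ = 1 ∧ t = 1 / 2 ∧
      ∃ c : ℂ, ‖c‖ = 1 ∧ ∀ z : ℂ × ℂ, ‖z.1‖ < 1 → ‖z.2‖ < 1 → h z = c := by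
  set w := h (β, 0) with hw
  have hβpos : (0:ℝ) < ‖β‖ := norm_pos_iff.mpr hβ0
  -- From heq : σ β w = (1-t)σ - t
  have heq' : σ * β * w = (1 - (t:ℂ)) * σ - t := by linear_combination heq
  have hnorm : ‖β‖ * ‖w‖ = ‖(1 - (t:ℂ)) * σ - t‖ := by
    calc ‖β‖ * ‖w‖ = ‖σ‖ * ‖β‖ * ‖w‖ := by rw [hσ]; ring
    _ = ‖σ * β * w‖ := by rw [norm_mul, norm_mul]
    _ = _ := by rw [heq']
  -- real coordinates of σ
  have hns : Complex.normSq σ = 1 := by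
    rw [Complex.normSq_eq_norm_sq, hσ]; norm_num
  have ha2 : σ.re ^ 2 + σ.im ^ 2 = 1 := by
    have := hns
    simp only [Complex.normSq_apply] at this
    nlinarith [this]
  have hN1 : ‖(1 - (t:ℂ)) * σ - t‖ ^ 2
      = (1 - t) ^ 2 - 2 * t * (1 - t) * σ.re + t ^ 2 := by
    rw [Complex.sq_norm]
    simp only [Complex.normSq_apply, Complex.sub_re, Complex.sub_im, Complex.mul_re,
      Complex.mul_im, Complex.one_re, Complex.one_im, Complex.ofReal_re, Complex.ofReal_im]
    nlinarith [ha2]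
  have hN2 : ‖1 - σ‖ ^ 2 = 2 - 2 * σ.re := by
    rw [Complex.sq_norm]
    simp only [Complex.normSq_apply, Complex.sub_re, Complex.sub_im, Complex.one_re,
      Complex.one_im]
    nlinarith [ha2]
  have hβsq : 4 * ‖β‖ ^ 2 = 2 - 2 * σ.re := by
    have := congrArg (· ^ 2) htan
    nlinarith [hN2]
  -- σ ≠ -1, i.e. σ.re > -1
  have hre_gt : -1 < σ.re := by
    rcases lt_or_eq_of_le (by nlinarith [ha2] : -1 ≤ σ.re) with h' | h'
    · exact h'
    · exfalso; nlinarith [hβsq]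
  obtain ⟨ht0, ht1⟩ := ht
  -- the key inequality
  have hkey : ‖β‖ ^ 2 ≤ ‖(1 - (t:ℂ)) * σ - t‖ ^ 2 := by
    rw [hN1]; nlinarith [sq_nonneg (2 * t - 1), hβsq, hre_gt]
  have hwle : ‖w‖ ≤ 1 := hbd (β, 0) hβ (by simp)
  have hw1 : ‖w‖ = 1 := by
    by_contra hne
    have hlt : ‖w‖ < 1 := lt_of_le_of_ne hwle hne
    have : ‖(1 - (t:ℂ)) * σ - t‖ < ‖β‖ := by
      rw [← hnorm]; nlinarith
    nlinarith [hkey, hβpos, this, norm_nonneg ((1 - (t:ℂ)) * σ - (t:ℂ))]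
  have hteq : t = 1 / 2 := by
    have heqn : ‖(1 - (t:ℂ)) * σ - t‖ = ‖β‖ := by rw [← hnorm, hw1, mul_one]
    have : (1 - t) ^ 2 - 2 * t * (1 - t) * σ.re + t ^ 2 = ‖β‖ ^ 2 := by
      rw [← hN1, heqn]
    have hsq : (1 + σ.re) * (2 * t - 1) ^ 2 = 0 := by
      linear_combination (2:ℝ) * this + (1/2 : ℝ) * hβsq
    have h0 : (2 * t - 1) ^ 2 = 0 := by
      rcases mul_eq_zero.mp hsq with h' | h'
      · linarith
      · exact h'
    have : 2 * t - 1 = 0 := by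
      have := sq_eq_zero_iff.mp h0
      linarith [this]
    linarith
  refine ⟨hw1, hteq, w, hw1, ?_⟩
  -- maximum principle
  set U : Set (ℂ × ℂ) := {z : ℂ × ℂ | ‖z.1‖ < 1 ∧ ‖z.2‖ < 1} with hU
  have hUeq : U = (Metric.ball (0:ℂ) 1) ×ˢ (Metric.ball (0:ℂ) 1) := by
    ext z; simp [hU, Set.mem_setOf_eq, Metric.mem_ball, dist_zero_right]
  have hUopen : IsOpen U := by
    rw [hUeq]; exact Metric.isOpen_ball.prod Metric.isOpen_ball
  have hUconn : IsPreconnected U := by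
    rw [hUeq]
    exact ((convex_ball (0:ℂ) 1).prod (convex_ball (0:ℂ) 1)).isPreconnected
  have hmem : (β, (0:ℂ)) ∈ U := ⟨hβ, by simp⟩
  have hmax : IsMaxOn (norm ∘ h) U (β, 0) := by
    intro z hz
    simp only [Function.comp_apply, Set.mem_setOf_eq, ← hw, hw1]
    exact hbd z hz.1 hz.2
  have := Complex.eqOn_of_isPreconnected_of_isMaxOn_norm hUconn hUopen hhol hmem hmax
  intro z hz1 hz2
  exact this ⟨hz1, hz2⟩
end

section
/- For every z ∈ 𝔼 (the tetrablock) and every ω with |ω| = 1, the equation Φ_ω(z₁, λz₂, λz₃) = λ, where Φ_ω(x) = (ω x₃ − x₁)/(ω x₂ − 1), has exactly one solution λ in the open unit disc 𝔻. -/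
open Complex ComplexConjugate

/-- The tetrablock 𝔼 ⊂ ℂ³. -/
def Tetrablock : Set (ℂ × ℂ × ℂ) :=
  {x | ‖x.1 - (starRingEnd ℂ) x.2.1 * x.2.2‖ +
       ‖x.2.1 - (starRingEnd ℂ) x.1 * x.2.2‖ + ‖x.2.2‖ ^ 2 < 1}

private lemma unit_mul_conj {ω : ℂ} (hω : ‖ω‖ = 1) : ω * conj ω = 1 := by
  rw [Complex.mul_conj]; norm_cast
  rw [Complex.normSq_eq_norm_sq, hω]; norm_num

private lemma unit_conj_eq_inv {ω : ℂ} (hω : ‖ω‖ = 1) : conj ω = ω⁻¹ := by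
  rw [Complex.inv_def, Complex.normSq_eq_norm_sq, hω]; norm_num

private lemma norm_sq_expand (a b c : ℂ) :
    ‖a - conj b * c‖^2 = normSq a + normSq b * normSq c - 2*(a * (b * conj c)).re := by
  have h : conj (conj b * c) = b * conj c := by rw [map_mul, Complex.conj_conj]
  rw [← Complex.normSq_eq_norm_sq, Complex.normSq_sub, Complex.normSq_mul,
    Complex.normSq_conj, h]

set_option maxHeartbeats 2000000 in
/-- The master inequality: if `x, y` (both in the closed unit disc) are the roots of the
quadratic associated with `(a,b,c)` and `ω`, then `(a,b,c)` is not in the tetrablock. -/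
private lemma core (ω a b c x y : ℂ) (hω : ‖ω‖ = 1) (hb : b ≠ 0)
    (hx : ‖x‖ ≤ 1) (hy : ‖y‖ ≤ 1)
    (hS : ω*b*(x+y) = 1 + ω*c) (hP : ω*b*(x*y) = a) :
    1 ≤ ‖a - conj b * c‖ + ‖b - conj a * c‖ + ‖c‖^2 := by
  by_contra hcon
  push_neg at hcon
  have hω0 : ω ≠ 0 := by intro h; rw [h] at hω; simp at hω
  have hωω : ω * conj ω = 1 := unit_mul_conj hω
  have hcω : conj ω = ω⁻¹ := unit_conj_eq_inv hω
  -- basic real quantities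
  set A := ‖a - conj b * c‖ with hA
  set B := ‖b - conj a * c‖ with hB
  have hA0 : 0 ≤ A := norm_nonneg _
  have hB0 : 0 ≤ B := norm_nonneg _
  have hs0 : 0 ≤ ‖c‖ := norm_nonneg _
  have hu : ‖a‖ = ‖b‖ * (‖x‖ * ‖y‖) := by
    rw [← hP]; simp [norm_mul, hω]
  have ht0 : 0 < ‖b‖ := norm_pos_iff.2 hb
  -- I1 : B^2 - A^2 = (t^2-u^2)(1-s^2)
  have hI1 : B^2 - A^2 = (‖b‖^2 - ‖a‖^2) * (1 - ‖c‖^2) := by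
    have e1 := norm_sq_expand a b c
    have e2 := norm_sq_expand b a c
    have hre : (a * (b * conj c)).re = (b * (a * conj c)).re := by ring_nf
    rw [hA, hB, e1, e2, hre, Complex.normSq_eq_norm_sq, Complex.normSq_eq_norm_sq,
      Complex.normSq_eq_norm_sq]
    ring
  by_cases hk1 : ‖x‖ * ‖y‖ = 1
  · -- torus case : ‖x‖ = ‖y‖ = 1
    have hx1 : ‖x‖ = 1 := by nlinarith [norm_nonneg x, norm_nonneg y]
    have hy1 : ‖y‖ = 1 := by nlinarith [norm_nonneg x, norm_nonneg y]
    have hx0 : x ≠ 0 := by intro h; rw [h] at hx1; simp at hx1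
    obtain ⟨ζ, hζ⟩ := IsAlgClosed.exists_pow_nat_eq (k := ℂ) (x*y) (n := 2) (by norm_num)
    have hζ1 : ‖ζ‖ = 1 := by
      have h2 : ‖ζ‖^2 = 1 := by rw [← norm_pow, hζ, norm_mul, hx1, hy1]; norm_num
      nlinarith [norm_nonneg ζ]
    have hζ0 : ζ ≠ 0 := by intro h; rw [h] at hζ1; simp at hζ1
    have hζζ : ζ * conj ζ = 1 := unit_mul_conj hζ1
    -- y * conj ζ is the conjugate of x * conj ζ
    have hxz1 : ‖x * conj ζ‖ = 1 := by
      rw [norm_mul, hx1, Complex.norm_conj, hζ1]; norm_num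
    have hxz0 : x * conj ζ ≠ 0 := by intro h; rw [h] at hxz1; simp at hxz1
    have hz21 : ‖ζ^2‖ = 1 := by rw [norm_pow, hζ1]; norm_num
    have m1 : (x * conj ζ) * (y * conj ζ) = 1 := by
      have e1 : (x * conj ζ) * (y * conj ζ) = (x*y) * conj (ζ^2) := by
        rw [map_pow]; ring
      rw [e1, ← hζ, unit_mul_conj hz21]
    have m2 : (x * conj ζ) * conj (x * conj ζ) = 1 := unit_mul_conj hxz1
    have hyx : y * conj ζ = conj (x * conj ζ) := mul_left_cancel₀ hxz0 (m1.trans m2.symm)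
    set c' := (x * conj ζ).re with hc'def
    have habsc' : |c'| ≤ 1 := by
      have := Complex.abs_re_le_norm (x * conj ζ)
      rw [hxz1] at this; exact this
    have hW : x + y = ((2*c' : ℝ) : ℂ) * ζ := by
      have e1 : (x + y) * conj ζ = ((2*c' : ℝ) : ℂ) := by
        have h := Complex.add_conj (x * conj ζ)
        rw [← hyx] at h
        push_cast at h
        rw [add_mul]
        push_cast
        linear_combination h
      calc x + y = ((x + y) * conj ζ) * ζ := by
            rw [mul_assoc, mul_comm (conj ζ) ζ, hζζ, mul_one]
        _ = ((2*c' : ℝ) : ℂ) * ζ := by rw [e1]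
    have hcval : c = conj ω * (ω*b*(x+y) - 1) := by
      rw [hcω]; field_simp; linear_combination -hS
    set R := (ω*b*ζ).re with hRdef
    set N := normSq (ω*b) with hNdef
    have f3 : ω*b*ζ + conj ω * (conj b * conj ζ) = 2*(R:ℂ) := by
      have h := Complex.add_conj (ω*b*ζ)
      push_cast at h
      simp only [map_mul] at h
      linear_combination h
    have f4 : ω*b*(conj ω * conj b) = (N:ℂ) := by
      have h := Complex.mul_conj (ω*b)
      have hd : conj (ω*b) = conj ω * conj b := map_mul conj ω b
      rw [hd] at h
      linear_combination h
    have hAtor : (a - conj b * c) * conj ζ = ((2*R - 2*N*c' : ℝ) : ℂ) := by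
      rw [← hP, hcval, hW, ← hζ]
      push_cast
      linear_combination (ω*b*ζ - 2*(c' : ℂ)*(ω*b*(conj ω * conj b)))*hζζ + f3
        - 2*(c' : ℂ)*f4
    have hcζ : conj ζ = ζ⁻¹ := unit_conj_eq_inv hζ1
    have hABtor : (a - conj b * c) * conj ζ = (b - conj a * c) * (ω * ζ) := by
      rw [← hP, hcval, hW, ← hζ]
      simp only [map_mul, map_sub, map_one, map_pow]
      rw [hcω, hcζ]; field_simp
    have hAnorm : ‖a - conj b * c‖ = |2*R - 2*N*c'| := by
      have : ‖a - conj b * c‖ = ‖(a - conj b * c) * conj ζ‖ := by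
        rw [norm_mul, Complex.norm_conj, hζ1, mul_one]
      rw [this, hAtor, Complex.norm_real, Real.norm_eq_abs]
    have hBnorm : ‖b - conj a * c‖ = |2*R - 2*N*c'| := by
      have h1 : ‖b - conj a * c‖ = ‖(b - conj a * c) * (ω * ζ)‖ := by
        rw [norm_mul, norm_mul, hω, hζ1, mul_one, mul_one]
      rw [h1, ← hABtor, hAtor, Complex.norm_real, Real.norm_eq_abs]
    have hs2 : ‖c‖^2 = 4*c'^2*N - 4*c'*R + 1 := by
      have hcg : c = conj ω * (((2*c' : ℝ) : ℂ) * (ω*b*ζ) - 1) := by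
        rw [hcval, hW]; ring
      have h1 : ‖c‖ = ‖((2*c' : ℝ) : ℂ) * (ω*b*ζ) - 1‖ := by
        rw [hcg, norm_mul, Complex.norm_conj, hω, one_mul]
      have hnsζ : normSq ζ = 1 := by
        rw [Complex.normSq_eq_norm_sq, hζ1]; norm_num
      rw [h1, ← Complex.normSq_eq_norm_sq, Complex.normSq_sub, Complex.normSq_mul,
        Complex.normSq_mul, hnsζ, Complex.normSq_ofReal]
      simp only [map_one, mul_one, Complex.normSq_one, Complex.re_ofReal_mul]
      ring
    -- final inequality
    have key : 2*c'*(2*R - 2*N*c') ≤ 2*|2*R - 2*N*c'| := by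
      nlinarith [le_abs_self (c'*(2*R - 2*N*c')), abs_mul c' (2*R - 2*N*c'),
        abs_nonneg (2*R - 2*N*c'), habsc', neg_abs_le (c'*(2*R - 2*N*c'))]
    rw [hA, hB] at hcon
    rw [hAnorm, hBnorm, hs2] at hcon
    linarith [key]
  · -- non-torus case
    have hxy1 : ‖x‖ * ‖y‖ ≤ 1 := mul_le_one₀ hx (norm_nonneg y) hy
    have hk : ‖x‖ * ‖y‖ < 1 := lt_of_le_of_ne hxy1 hk1
    have hut : ‖a‖ < ‖b‖ := by
      rw [hu]; nlinarith
    -- the cross quantity X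
    set X := a - conj b * c - conj ω * conj (b - conj a * c) with hX
    have hXlow : B - A ≤ ‖X‖ := by
      have h1 : ‖conj ω * conj (b - conj a * c)‖ = B := by
        rw [norm_mul, Complex.norm_conj, Complex.norm_conj, hω, one_mul]
      calc B - A = ‖conj ω * conj (b - conj a * c)‖ - ‖a - conj b * c‖ := by rw [h1]
        _ ≤ ‖conj ω * conj (b - conj a * c) - (a - conj b * c)‖ := norm_sub_norm_le _ _
        _ = ‖X‖ := by rw [hX, norm_sub_rev]
    -- root form of X
    have hcval : c = conj ω * (ω*b*(x+y) - 1) := by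
      rw [hcω]; field_simp; linear_combination -hS
    have hXval : X = -((ω*b) * (conj ω * conj b) * (x*(1 - y*conj y) + y*(1 - x*conj x))) := by
      rw [hX, hcval, ← hP]
      simp only [map_sub, map_mul, map_add, map_one, Complex.conj_conj]
      rw [hcω]; field_simp; ring
    have hXup : ‖X‖ ≤ ‖b‖^2 * (‖x‖*(1-‖y‖^2) + ‖y‖*(1-‖x‖^2)) := by
      have h1 : ‖(ω*b) * (conj ω * conj b)‖ = ‖b‖^2 := by
        rw [norm_mul, norm_mul, norm_mul, hω, Complex.norm_conj, Complex.norm_conj, hω]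
        ring
      have h2y : (0:ℝ) ≤ 1 - ‖y‖^2 := by nlinarith [norm_nonneg y]
      have h2x : (0:ℝ) ≤ 1 - ‖x‖^2 := by nlinarith [norm_nonneg x]
      have h2 : ‖(1 : ℂ) - y*conj y‖ = 1 - ‖y‖^2 := by
        have e : (1 : ℂ) - y*conj y = ((1 - ‖y‖^2 : ℝ) : ℂ) := by
          rw [Complex.mul_conj, Complex.normSq_eq_norm_sq]; push_cast; ring
        rw [e, Complex.norm_real, Real.norm_eq_abs, _root_.abs_of_nonneg h2y]
      have h3 : ‖(1 : ℂ) - x*conj x‖ = 1 - ‖x‖^2 := by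
        have e : (1 : ℂ) - x*conj x = ((1 - ‖x‖^2 : ℝ) : ℂ) := by
          rw [Complex.mul_conj, Complex.normSq_eq_norm_sq]; push_cast; ring
        rw [e, Complex.norm_real, Real.norm_eq_abs, _root_.abs_of_nonneg h2x]
      calc ‖X‖ = ‖b‖^2 * ‖x*(1 - y*conj y) + y*(1 - x*conj x)‖ := by
            rw [hXval, norm_neg, norm_mul, h1]
        _ ≤ ‖b‖^2 * (‖x‖*(1-‖y‖^2) + ‖y‖*(1-‖x‖^2)) := by
            apply mul_le_mul_of_nonneg_left _ (by positivity)
            calc ‖x*(1 - y*conj y) + y*(1 - x*conj x)‖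
                ≤ ‖x*(1 - y*conj y)‖ + ‖y*(1 - x*conj x)‖ := norm_add_le _ _
              _ = ‖x‖*(1-‖y‖^2) + ‖y‖*(1-‖x‖^2) := by rw [norm_mul, norm_mul, h2, h3]
    have haux : ‖x‖*(1-‖y‖^2) + ‖y‖*(1-‖x‖^2) ≤ 1 - (‖x‖*‖y‖)^2 := by
      nlinarith [mul_nonneg (mul_nonneg (sub_nonneg.2 hx) (sub_nonneg.2 hy))
        (sub_nonneg.2 hxy1), norm_nonneg x, norm_nonneg y]
    have hfin : B - A ≤ ‖b‖^2 - ‖a‖^2 := by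
      have : ‖b‖^2 * (1 - (‖x‖*‖y‖)^2) = ‖b‖^2 - ‖a‖^2 := by rw [hu]; ring
      nlinarith [hXlow, hXup, haux]
    -- final contradiction
    have h1 : (B - A) * (B + A) = (‖b‖^2 - ‖a‖^2) * (1 - ‖c‖^2) := by linear_combination hI1
    have h2 : (B - A) * (B + A) ≤ (‖b‖^2 - ‖a‖^2) * (B + A) :=
      mul_le_mul_of_nonneg_right hfin (by linarith)
    have h3 : (0:ℝ) < ‖b‖^2 - ‖a‖^2 := by nlinarith [norm_nonneg a]
    nlinarith [h1, h2, h3, hcon]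

set_option maxHeartbeats 2000000 in
/-- For every `z ∈ 𝔼` and every unimodular ω, the equation
`Φ_ω(z₁, w z₂, w z₃) = w`, where `Φ_ω(x) = (ω x₃ − x₁)/(ω x₂ − 1)`, has exactly
one solution `w` in the open unit disc. -/
theorem tetrablock_unique_solution (z : ℂ × ℂ × ℂ) (hz : z ∈ Tetrablock)
    (ω : ℂ) (hω : ‖ω‖ = 1) :
    ∃! w : ℂ, ‖w‖ < 1 ∧
      (ω * (w * z.2.2) - z.1) / (ω * (w * z.2.1) - 1) = w := by
  obtain ⟨a, b, c⟩ := z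
  simp only [Tetrablock, Set.mem_setOf_eq] at hz
  dsimp only at hz ⊢
  have hω0 : ω ≠ 0 := by intro h; rw [h] at hω; simp at hω
  have hωω : ω * conj ω = 1 := unit_mul_conj hω
  have hcω : conj ω = ω⁻¹ := unit_conj_eq_inv hω
  have hA0 : (0:ℝ) ≤ ‖a - conj b * c‖ := norm_nonneg _
  have hB0 : (0:ℝ) ≤ ‖b - conj a * c‖ := norm_nonneg _
  have hs1 : ‖c‖ < 1 := by nlinarith [norm_nonneg c]
  have hb1 : ‖b‖ < 1 := by
    have h1 : ‖b‖ ≤ ‖b - conj a * c‖ + ‖a‖ * ‖c‖ := by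
      calc ‖b‖ = ‖(b - conj a * c) + conj a * c‖ := by ring_nf
        _ ≤ ‖b - conj a * c‖ + ‖conj a * c‖ := norm_add_le _ _
        _ = ‖b - conj a * c‖ + ‖a‖ * ‖c‖ := by
            rw [norm_mul, Complex.norm_conj]
    have h2 : ‖a‖ ≤ ‖a - conj b * c‖ + ‖b‖ * ‖c‖ := by
      calc ‖a‖ = ‖(a - conj b * c) + conj b * c‖ := by ring_nf
        _ ≤ ‖a - conj b * c‖ + ‖conj b * c‖ := norm_add_le _ _
        _ = ‖a - conj b * c‖ + ‖b‖ * ‖c‖ := by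
            rw [norm_mul, Complex.norm_conj]
    nlinarith [norm_nonneg a, norm_nonneg b, norm_nonneg c,
      mul_le_mul_of_nonneg_right h2 (norm_nonneg c),
      mul_le_mul_of_nonneg_left hs1.le hA0]
  have hden : ∀ w : ℂ, ‖w‖ < 1 → ω * (w * b) - 1 ≠ 0 := by
    intro w hw h
    have h1 : ω * (w * b) = 1 := by linear_combination h
    have h2 : ‖ω * (w * b)‖ = 1 := by rw [h1]; norm_num
    rw [norm_mul, norm_mul, hω, one_mul] at h2
    nlinarith [norm_nonneg w, norm_nonneg b]
  have hiff : ∀ w : ℂ, ‖w‖ < 1 →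
      ((ω * (w * c) - a) / (ω * (w * b) - 1) = w ↔ ω * (w * c) - a = w * (ω * (w * b) - 1)) :=
    fun w hw => div_eq_iff (hden w hw)
  by_cases hb0 : b = 0
  · -- linear case
    subst hb0
    simp only [map_zero, zero_mul, sub_zero, zero_sub, norm_neg, norm_mul] at hz
    have hca : ‖conj a‖ = ‖a‖ := by
      rw [Complex.norm_conj]
    rw [hca] at hz
    have hden1 : (1 : ℂ) + ω * c ≠ 0 := by
      intro h
      have h1 : ω * c = -1 := by linear_combination h
      have h2 : ‖ω * c‖ = 1 := by rw [h1]; norm_num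
      rw [norm_mul, hω, one_mul] at h2; linarith
    have hnc : 1 - ‖c‖ ≤ ‖(1:ℂ) + ω * c‖ := by
      have h1 := norm_sub_norm_le (1 : ℂ) (-(ω * c))
      rw [sub_neg_eq_add, norm_neg, norm_mul, hω, one_mul, norm_one] at h1
      exact h1
    have ha1 : ‖a‖ < ‖(1:ℂ) + ω * c‖ := by nlinarith [norm_nonneg a, norm_nonneg c]
    refine ⟨a / (1 + ω * c), ⟨?_, ?_⟩, ?_⟩
    · rw [norm_div]
      exact div_lt_one (lt_of_le_of_lt (norm_nonneg a) ha1) |>.2 ha1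
    · have hd : ω * (a / (1 + ω * c) * 0) - 1 = -1 := by ring
      rw [hd, div_eq_iff (by norm_num : (-1 : ℂ) ≠ 0)]
      linear_combination div_mul_cancel₀ a hden1
    · intro w' hw'
      obtain ⟨hw'n, he⟩ := hw'
      have hd : ω * (w' * 0) - 1 = -1 := by ring
      rw [hd] at he
      have h1 : ω * (w' * c) - a = w' * (-1) := by
        rw [div_eq_iff (by norm_num : (-1 : ℂ) ≠ 0)] at he; exact he
      rw [eq_div_iff hden1]
      linear_combination h1
  · -- quadratic case
    obtain ⟨δ, hδ⟩ := IsAlgClosed.exists_pow_nat_eq (k := ℂ) ((1 + ω*c)^2 - 4*(ω*b)*a)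
      (n := 2) (by norm_num)
    have hb' : ω * b ≠ 0 := mul_ne_zero hω0 hb0
    set x := (1 + ω*c + δ) / (2*(ω*b)) with hxdef
    set y := (1 + ω*c - δ) / (2*(ω*b)) with hydef
    have hS : ω*b*(x+y) = 1 + ω*c := by rw [hxdef, hydef]; field_simp [hω0, hb0]; ring
    have hP : ω*b*(x*y) = a := by
      rw [hxdef, hydef]; field_simp [hω0, hb0]; linear_combination -hδ
    clear_value x y
    -- the builder: any strict root gives existence and uniqueness
    have build : ∀ r : ℂ, ‖r‖ < 1 → ω*(r*c) - a = r*(ω*(r*b) - 1) →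
        ∃! w : ℂ, ‖w‖ < 1 ∧ (ω * (w * c) - a) / (ω * (w * b) - 1) = w := by
      intro r hr hre
      refine ⟨r, ⟨hr, (hiff r hr).2 hre⟩, ?_⟩
      intro w' hw'
      obtain ⟨hw'n, he⟩ := hw'
      rw [hiff w' hw'n] at he
      by_contra hne
      have hsub : (w' - r) * (ω*b*(w'+r) - 1 - ω*c) = 0 := by
        linear_combination hre - he
      have hS2 : ω*b*(w'+r) = 1 + ω*c := by
        rcases mul_eq_zero.1 hsub with h | h
        · exact absurd (sub_eq_zero.1 h) hne
        · linear_combination h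
      have hP2 : ω*b*(w'*r) = a := by linear_combination w'*hS2 + he
      have h1 := core ω a b c w' r hω hb0 hw'n.le hr.le hS2 hP2
      linarith
    have hroot : ‖x‖ < 1 ∨ ‖y‖ < 1 := by
      by_contra hcon
      push_neg at hcon
      obtain ⟨hx1, hy1⟩ := hcon
      have hx0 : x ≠ 0 := by
        intro h; rw [h] at hx1; simp at hx1; linarith
      have hy0 : y ≠ 0 := by
        intro h; rw [h] at hy1; simp at hy1; linarith
      have ha0 : a ≠ 0 := by
        intro h
        rw [h] at hP
        rcases mul_eq_zero.1 hP with h' | h'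
        · exact hb' h'
        · rcases mul_eq_zero.1 h' with h'' | h''
          · exact hx0 h''
          · exact hy0 h''
      have hnx : ‖conj ω * x⁻¹‖ ≤ 1 := by
        rw [norm_mul, Complex.norm_conj,
          hω, one_mul, norm_inv]
        exact inv_le_one_of_one_le₀ hx1
      have hny : ‖conj ω * y⁻¹‖ ≤ 1 := by
        rw [norm_mul, Complex.norm_conj,
          hω, one_mul, norm_inv]
        exact inv_le_one_of_one_le₀ hy1
      have hS' : ω*a*(conj ω * x⁻¹ + conj ω * y⁻¹) = 1 + ω*c := by
        rw [hcω]
        field_simp [hω0, hx0, hy0]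
        linear_combination -((x+y)*hP - x*y*hS)
      have hP' : ω*a*((conj ω * x⁻¹) * (conj ω * y⁻¹)) = b := by
        rw [hcω]
        field_simp [hω0, hx0, hy0]
        linear_combination -hP
      have h1 := core ω b a c (conj ω * x⁻¹) (conj ω * y⁻¹) hω ha0 hnx hny hS' hP'
      linarith
    rcases hroot with h | h
    · exact build x h (by linear_combination hP - x*hS)
    · exact build y h (by linear_combination hP - y*hS)
end

section
/- For every ω in the closed unit disc, the map 𝔼 ∋ x ↦ (x₁ + ω·x₂, ω·x₃) ∈ ℂ² maps the tetrablock 𝔼 into the symmetrized bidisc 𝔾₂. -/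
open Complex

lemma conj_mul_self_eq (z : ℂ) : (starRingEnd ℂ) z * z = ((‖z‖ : ℂ))^2 := by
  rw [← normSq_eq_conj_mul_self, normSq_eq_norm_sq]
  push_cast
  ring

lemma root_lt_one (w₁ w₂ : ℂ)
    (h : ‖(w₁ + w₂) - (starRingEnd ℂ) (w₁ + w₂) * (w₁ * w₂)‖ + ‖w₁ * w₂‖ ^ 2 < 1) :
    ‖w₁‖ < 1 := by
  by_contra hr
  push_neg at hr
  set r := ‖w₁‖ with hrdef
  set q := ‖w₂‖ with hqdef
  have hq0 : 0 ≤ q := norm_nonneg _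
  have hr0 : 0 ≤ r := norm_nonneg _
  have hnorm : ‖w₁ * w₂‖ = r * q := norm_mul _ _
  have hp1 : r * q < 1 := by nlinarith [norm_nonneg ((w₁ + w₂) - (starRingEnd ℂ) (w₁ + w₂) * (w₁ * w₂))]
  have hq1 : q < 1 := by nlinarith
  have hid : (w₁ + w₂) - (starRingEnd ℂ) (w₁ + w₂) * (w₁ * w₂)
      = w₁ * (1 - ((q : ℂ))^2) + w₂ * (1 - ((r : ℂ))^2) := by
    have h1 := conj_mul_self_eq w₁
    have h2 := conj_mul_self_eq w₂
    rw [map_add]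
    linear_combination (-w₂) * h1 + (-w₁) * h2
  have hb1 : ‖w₁ * (1 - ((q : ℂ))^2)‖ = r * (1 - q^2) := by
    rw [norm_mul]
    have e : (1 - ((q : ℂ))^2) = (((1 - q^2 : ℝ)) : ℂ) := by push_cast; ring
    rw [e, Complex.norm_real, Real.norm_eq_abs]
    rw [_root_.abs_of_nonneg (by nlinarith : (0:ℝ) ≤ 1 - q^2)]
  have hb2 : ‖w₂ * (1 - ((r : ℂ))^2)‖ = q * (r^2 - 1) := by
    rw [norm_mul]
    have e : (1 - ((r : ℂ))^2) = (((1 - r^2 : ℝ)) : ℂ) := by push_cast; ring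
    rw [e, Complex.norm_real, Real.norm_eq_abs]
    rw [_root_.abs_of_nonpos (by nlinarith : (1:ℝ) - r^2 ≤ 0)]
    ring
  have hlow : r * (1 - q^2) - q * (r^2 - 1) ≤ ‖(w₁ + w₂) - (starRingEnd ℂ) (w₁ + w₂) * (w₁ * w₂)‖ := by
    rw [hid, ← hb1, ← hb2]
    have := norm_add_le (w₁ * (1 - ((q : ℂ))^2) + w₂ * (1 - ((r : ℂ))^2)) (-(w₂ * (1 - ((r : ℂ))^2)))
    simp only [add_neg_cancel_right, norm_neg] at this
    linarith
  nlinarith [mul_nonneg (mul_nonneg (by linarith : (0:ℝ) ≤ r - 1) (by linarith : (0:ℝ) ≤ 1 - q)) (by nlinarith : (0:ℝ) ≤ 1 - q*r)]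

lemma real_ineq_s12 (a b c t r1 r2 : ℝ) (ha : 0 ≤ a) (hb : 0 ≤ b) (hc : 0 ≤ c)
    (hr1 : 0 ≤ r1) (hr2 : 0 ≤ r2) (ht0 : 0 ≤ t) (ht1 : t ≤ 1)
    (hT : a + b + c^2 < 1) (h1 : r1 ≤ a + r2 * c) (h2 : r2 ≤ b + r1 * c) :
    a + (1 - t^2) * r2 * c + t * b + (t * c)^2 < 1 := by
  have hc1 : c < 1 := by nlinarith
  have hD : 0 < 1 - c^2 := by nlinarith
  have hrD : r2 * (1 - c^2) ≤ b + a * c := by nlinarith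
  have htc : t * c < 1 := by nlinarith
  have htc2 : t^2 * c^2 < 1 := by nlinarith [mul_nonneg ht0 hc]
  nlinarith [mul_nonneg (mul_nonneg (mul_nonneg hb (by linarith : (0:ℝ) ≤ 1 - t)) (by linarith : (0:ℝ) ≤ 1 - c)) (by nlinarith : (0:ℝ) ≤ 1 - t*c),
    mul_pos (by nlinarith : (0:ℝ) < 1 - c^2 - a - b) (by linarith : (0:ℝ) < 1 - t^2*c^2),
    mul_nonneg (mul_nonneg (by nlinarith : (0:ℝ) ≤ 1 - t^2) hc) (by linarith : (0:ℝ) ≤ b + a*c - r2*(1-c^2))]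

/-- The symmetrized bidisc 𝔾₂ ⊂ ℂ². -/
def SymmetrizedBidisc : Set (ℂ × ℂ) :=
  {p | ∃ w₁ w₂ : ℂ, ‖w₁‖ < 1 ∧ ‖w₂‖ < 1 ∧ p = (w₁ + w₂, w₁ * w₂)}

/-- For every ω in the closed unit disc, the map `x ↦ (x₁ + ω x₂, ω x₃)`
sends the tetrablock into the symmetrized bidisc. -/
theorem tetrablock_to_symmetrized_bidisc (ω : ℂ) (hω : ‖ω‖ ≤ 1)
    (x : ℂ × ℂ × ℂ) (hx : x ∈ Tetrablock) :
    (x.1 + ω * x.2.1, ω * x.2.2) ∈ SymmetrizedBidisc := by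
  obtain ⟨x₁, x₂, x₃⟩ := x
  simp only [Tetrablock, Set.mem_setOf_eq] at hx
  set s : ℂ := x₁ + ω * x₂ with hs
  set p : ℂ := ω * x₃ with hp
  -- key estimate
  have key : ‖s - (starRingEnd ℂ) s * p‖ + ‖p‖ ^ 2 < 1 := by
    set t := ‖ω‖; set c := ‖x₃‖
    set a := ‖x₁ - (starRingEnd ℂ) x₂ * x₃‖
    set b := ‖x₂ - (starRingEnd ℂ) x₁ * x₃‖
    have hid : s - (starRingEnd ℂ) s * p
        = (x₁ - (starRingEnd ℂ) x₂ * x₃) + (1 - ((t:ℂ))^2) * ((starRingEnd ℂ) x₂ * x₃)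
          + ω * (x₂ - (starRingEnd ℂ) x₁ * x₃) := by
      have hw := conj_mul_self_eq ω
      rw [hs, hp, map_add, map_mul]
      linear_combination (-((starRingEnd ℂ) x₂ * x₃)) * hw
    have hn2 : ‖(1 - ((t:ℂ))^2) * ((starRingEnd ℂ) x₂ * x₃)‖ = (1 - t^2) * ‖x₂‖ * c := by
      rw [norm_mul, norm_mul, RCLike.norm_conj]
      have e : (1 - ((t:ℂ))^2) = (((1 - t^2 : ℝ)) : ℂ) := by push_cast; ring
      rw [e, Complex.norm_real, Real.norm_eq_abs,
        _root_.abs_of_nonneg (by nlinarith [norm_nonneg ω] : (0:ℝ) ≤ 1 - t^2)]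
      ring
    have hn3 : ‖ω * (x₂ - (starRingEnd ℂ) x₁ * x₃)‖ = t * b := norm_mul _ _
    have hnb : ‖s - (starRingEnd ℂ) s * p‖ ≤ a + (1 - t^2) * ‖x₂‖ * c + t * b := by
      rw [hid]
      calc ‖(x₁ - (starRingEnd ℂ) x₂ * x₃) + (1 - ((t:ℂ))^2) * ((starRingEnd ℂ) x₂ * x₃)
            + ω * (x₂ - (starRingEnd ℂ) x₁ * x₃)‖
          ≤ ‖(x₁ - (starRingEnd ℂ) x₂ * x₃) + (1 - ((t:ℂ))^2) * ((starRingEnd ℂ) x₂ * x₃)‖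
            + ‖ω * (x₂ - (starRingEnd ℂ) x₁ * x₃)‖ := norm_add_le _ _
        _ ≤ ‖x₁ - (starRingEnd ℂ) x₂ * x₃‖ + ‖(1 - ((t:ℂ))^2) * ((starRingEnd ℂ) x₂ * x₃)‖
            + ‖ω * (x₂ - (starRingEnd ℂ) x₁ * x₃)‖ := by
              have := norm_add_le (x₁ - (starRingEnd ℂ) x₂ * x₃) ((1 - ((t:ℂ))^2) * ((starRingEnd ℂ) x₂ * x₃))
              linarith
        _ = a + (1 - t^2) * ‖x₂‖ * c + t * b := by rw [hn2, hn3]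
    have hr1 : ‖x₁‖ ≤ a + ‖x₂‖ * c := by
      calc ‖x₁‖ = ‖(x₁ - (starRingEnd ℂ) x₂ * x₃) + (starRingEnd ℂ) x₂ * x₃‖ := by ring_nf
        _ ≤ a + ‖(starRingEnd ℂ) x₂ * x₃‖ := norm_add_le _ _
        _ = a + ‖x₂‖ * c := by rw [norm_mul, RCLike.norm_conj]
    have hr2 : ‖x₂‖ ≤ b + ‖x₁‖ * c := by
      calc ‖x₂‖ = ‖(x₂ - (starRingEnd ℂ) x₁ * x₃) + (starRingEnd ℂ) x₁ * x₃‖ := by ring_nf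
        _ ≤ b + ‖(starRingEnd ℂ) x₁ * x₃‖ := norm_add_le _ _
        _ = b + ‖x₁‖ * c := by rw [norm_mul, RCLike.norm_conj]
    have hpn : ‖p‖ = t * c := norm_mul _ _
    have := real_ineq_s12 a b c t ‖x₁‖ ‖x₂‖ (norm_nonneg _) (norm_nonneg _) (norm_nonneg _)
      (norm_nonneg _) (norm_nonneg _) (norm_nonneg _) hω hx hr1 hr2
    rw [hpn]
    linarith
  -- find the roots
  obtain ⟨d, hd⟩ : ∃ d : ℂ, d ^ 2 = s ^ 2 - 4 * p :=
    IsAlgClosed.exists_pow_nat_eq (s ^ 2 - 4 * p) (by norm_num : 0 < 2)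
  refine ⟨(s + d) / 2, (s - d) / 2, ?_, ?_, ?_⟩
  · apply root_lt_one
    have e1 : (s + d) / 2 + (s - d) / 2 = s := by ring
    have e2 : (s + d) / 2 * ((s - d) / 2) = p := by linear_combination (-1/4 : ℂ) * hd
    rw [e1, e2]; exact key
  · apply root_lt_one ((s - d)/2) ((s + d)/2)
    have e1 : (s - d) / 2 + (s + d) / 2 = s := by ring
    have e2 : (s - d) / 2 * ((s + d) / 2) = p := by linear_combination (-1/4 : ℂ) * hd
    rw [e1, e2]; exact key
  · have e1 : (s + d) / 2 + (s - d) / 2 = s := by ring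
    have e2 : (s + d) / 2 * ((s - d) / 2) = p := by linear_combination (-1/4 : ℂ) * hd
    rw [e1, e2]
end

section
/- For every ω with |ω| = 1, the map 𝔾₂ ∋ (s, p) ↦ (ω·s/2, s/2, ω·p) ∈ ℂ³ maps the symmetrized bidisc 𝔾₂ into the tetrablock 𝔼. -/
/-- For every unimodular ω, the map `(s,p) ↦ (ω s/2, s/2, ω p)` embeds the
symmetrized bidisc into the tetrablock. -/
theorem symmetrized_bidisc_to_tetrablock (ω : ℂ) (hω : ‖ω‖ = 1)
    (s p : ℂ) (hsp : (s, p) ∈ SymmetrizedBidisc) :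
    (ω * s / 2, s / 2, ω * p) ∈ Tetrablock := by
  obtain ⟨w₁, w₂, h1, h2, heq⟩ := hsp
  have hs : s = w₁ + w₂ := congrArg Prod.fst heq
  have hp : p = w₁ * w₂ := congrArg Prod.snd heq
  subst hs; subst hp
  have hωω : (starRingEnd ℂ) ω * ω = 1 := by
    rw [mul_comm, Complex.mul_conj]
    norm_cast
    simp [Complex.normSq_eq_norm_sq, hω]
  simp only [Tetrablock, Set.mem_setOf_eq]
  obtain ⟨q, hq⟩ : ∃ q : ℂ,
      q = w₁ * (1 - w₂ * (starRingEnd ℂ) w₂) + w₂ * (1 - w₁ * (starRingEnd ℂ) w₁) := ⟨_, rfl⟩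
  have e1 : ω * (w₁ + w₂) / 2 - (starRingEnd ℂ) ((w₁ + w₂) / 2) * (ω * (w₁ * w₂))
      = ω * (q / 2) := by
    simp only [hq, map_div₀, map_add, Complex.conj_ofNat]
    ring
  have e2 : (w₁ + w₂) / 2 - (starRingEnd ℂ) (ω * (w₁ + w₂) / 2) * (ω * (w₁ * w₂))
      = q / 2 := by
    simp only [hq, map_div₀, map_add, map_mul, Complex.conj_ofNat]
    linear_combination (-((starRingEnd ℂ) w₁ + (starRingEnd ℂ) w₂) * (w₁ * w₂) / 2) * hωω
  rw [e1, e2]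
  have hqform : q = w₁ * (1 - w₂ * (starRingEnd ℂ) w₂) + w₂ * (1 - w₁ * (starRingEnd ℂ) w₁) := hq
  have key : ∀ w : ℂ, ‖w‖ < 1 → ‖(1 : ℂ) - w * (starRingEnd ℂ) w‖ = 1 - ‖w‖ ^ 2 := by
    intro w hw
    have : w * (starRingEnd ℂ) w = ((‖w‖ ^ 2 : ℝ) : ℂ) := by
      rw [Complex.mul_conj]; norm_cast
      simp [Complex.normSq_eq_norm_sq]
    rw [this]
    rw [show (1 : ℂ) - ((‖w‖ ^ 2 : ℝ) : ℂ) = (((1 - ‖w‖ ^ 2 : ℝ)) : ℂ) by push_cast; ring]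
    rw [Complex.norm_real, Real.norm_eq_abs, abs_of_nonneg]
    nlinarith [norm_nonneg w]
  have hqbound : ‖q‖ ≤ ‖w₁‖ * (1 - ‖w₂‖ ^ 2) + ‖w₂‖ * (1 - ‖w₁‖ ^ 2) := by
    rw [hqform]
    calc ‖w₁ * (1 - w₂ * (starRingEnd ℂ) w₂) + w₂ * (1 - w₁ * (starRingEnd ℂ) w₁)‖
        ≤ ‖w₁ * (1 - w₂ * (starRingEnd ℂ) w₂)‖ + ‖w₂ * (1 - w₁ * (starRingEnd ℂ) w₁)‖ :=
          norm_add_le _ _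
      _ = ‖w₁‖ * (1 - ‖w₂‖ ^ 2) + ‖w₂‖ * (1 - ‖w₁‖ ^ 2) := by
          rw [norm_mul, norm_mul, key w₂ h2, key w₁ h1]
  have n1 : ‖ω * (q / 2)‖ = ‖q‖ / 2 := by
    rw [norm_mul, hω, one_mul, norm_div]; norm_num
  have n2 : ‖q / 2‖ = ‖q‖ / 2 := by rw [norm_div]; norm_num
  have n3 : ‖ω * (w₁ * w₂)‖ ^ 2 = (‖w₁‖ * ‖w₂‖) ^ 2 := by
    rw [norm_mul, hω, one_mul, norm_mul]
  rw [n1, n2, n3]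
  have a0 := norm_nonneg w₁
  have b0 := norm_nonneg w₂
  nlinarith [mul_pos (mul_pos (sub_pos.mpr h1) (sub_pos.mpr h2))
    (sub_pos.mpr (show ‖w₁‖ * ‖w₂‖ < 1 by nlinarith))]
end

section
/- Let D ⊂ ℂⁿ (n ≥ 2) be a convex domain, σ ∈ 𝔻 \ {0}, and let f¹, …, fⁿ : 𝔻 → D be complex geodesics with f¹(0) = ⋯ = fⁿ(0) = w and f¹(σ) = ⋯ = fⁿ(σ) = z, such that for some λ₀ ∈ 𝔻 the vectors f¹(λ₀) − fⁿ(λ₀), …, f^{n−1}(λ₀) − fⁿ(λ₀) are linearly independent. Then there is exactly one holomorphic F : D → 𝔻 satisfying F ∘ f = id_𝔻 for every complex geodesic f : 𝔻 → D with f(0) = w, f(σ) = z. -/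
open Metric


section Helpers

lemma schwarz_fix {φ : ℂ → ℂ} (hd : DifferentiableOn ℂ φ (ball 0 1))
    (hmap : Set.MapsTo φ (ball 0 1) (ball 0 1)) (h0 : φ 0 = 0)
    {σ : ℂ} (hσ : σ ∈ ball (0:ℂ) 1) (hσ0 : σ ≠ 0) (hfix : φ σ = σ) :
    ∀ x ∈ ball (0:ℂ) 1, φ x = x := by
  have hmaps : Set.MapsTo φ (ball 0 1) (ball (φ 0) 1) := by rw [h0]; exact hmap
  have hds : dslope φ 0 σ = 1 := by
    rw [dslope_of_ne _ hσ0, slope_def_field, h0, hfix]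
    field_simp
  have h_eq : ‖dslope φ 0 σ‖ = 1 / 1 := by rw [hds]; norm_num
  have key := Complex.affine_of_mapsTo_ball_of_exists_norm_dslope_eq_div hd (hmaps.mono_right ball_subset_closedBall) hσ h_eq
  intro x hx
  have := key hx
  simpa [hds, h0] using this

lemma key_left_inverse {n : ℕ} {D : Set (Fin n → ℂ)} {σ : ℂ} (hσ : ‖σ‖ < 1) (hσ0 : σ ≠ 0)
    {F : (Fin n → ℂ) → ℂ} (hFd : DifferentiableOn ℂ F D) (hFb : ∀ x ∈ D, ‖F x‖ < 1)
    {g : ℂ → Fin n → ℂ} (hgd : DifferentiableOn ℂ g {v : ℂ | ‖v‖ < 1})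
    (hgD : ∀ v : ℂ, ‖v‖ < 1 → g v ∈ D)
    (hFg0 : F (g 0) = 0) (hFgσ : F (g σ) = σ) :
    ∀ v : ℂ, ‖v‖ < 1 → F (g v) = v := by
  have hset : {v : ℂ | ‖v‖ < 1} = ball (0:ℂ) 1 := by
    ext v; simp [mem_ball, dist_zero_right]
  rw [hset] at hgd
  have hcomp : DifferentiableOn ℂ (F ∘ g) (ball 0 1) :=
    hFd.comp hgd fun v hv => hgD v (by simpa [mem_ball, dist_zero_right] using hv)
  have hmap : Set.MapsTo (F ∘ g) (ball 0 1) (ball 0 1) := fun v hv => by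
    simp only [Function.comp_apply, mem_ball, dist_zero_right]
    exact hFb _ (hgD v (by simpa [mem_ball, dist_zero_right] using hv))
  intro v hv
  have := schwarz_fix hcomp hmap hFg0 (by simpa [mem_ball, dist_zero_right] using hσ) hσ0 hFgσ
    v (by simpa [mem_ball, dist_zero_right] using hv)
  simpa using this

lemma vanish_of_real_vanish {n : ℕ} (ψ : (Fin n → ℂ) → ℂ) (u₀ : Fin n → ℂ)
    (r : ℝ) (hr : 0 < r) [NeZero n] (hreal : ∀ j : Fin n, j ≠ 0 → (u₀ j).im = 0)
    (hψ : DifferentiableOn ℂ ψ (ball u₀ r))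
    (hz : ∀ u ∈ ball u₀ r, (∀ j : Fin n, j ≠ 0 → (u j).im = 0) → ψ u = 0) :
    ∀ u ∈ ball u₀ r, ψ u = 0 := by
  have key : ∀ k : ℕ, ∀ u ∈ ball u₀ r, (∀ j : Fin n, k + 1 ≤ (j : ℕ) → (u j).im = 0) →
      ψ u = 0 := by
    intro k
    induction k with
    | zero =>
      intro u hu h
      refine hz u hu fun j hj => h j ?_
      have : (j : ℕ) ≠ 0 := fun hc => hj (Fin.ext (by simp [hc]))
      omega
    | succ k ih =>
      intro u hu h
      by_cases hkn : k + 1 < n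
      · set K : Fin n := ⟨k + 1, hkn⟩ with hK
        have hK0 : K ≠ 0 := by
          intro hc
          have : (K : ℕ) = 0 := by rw [hc]; simp
          simp [hK] at this
        set η : ℂ → ℂ := fun ζ => ψ (Function.update u K ζ) with hη
        have hupd : ∀ ζ : ℂ, dist ζ (u₀ K) < r → Function.update u K ζ ∈ ball u₀ r := by
          intro ζ hζ
          rw [mem_ball, dist_pi_lt_iff hr]
          intro j
          rcases eq_or_ne j K with rfl | hjK
          · simpa using hζ
          · rw [Function.update_of_ne hjK]
            exact lt_of_le_of_lt (dist_le_pi_dist u u₀ j) (mem_ball.mp hu)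
        have haffd : Differentiable ℂ (fun ζ : ℂ => Function.update u K ζ) := by
          have heq : (fun ζ : ℂ => Function.update u K ζ)
              = fun ζ => Function.update u K 0 + ζ • Pi.single K 1 := by
            funext ζ
            funext j
            rcases eq_or_ne j K with rfl | hjK
            · simp
            · simp [Function.update_of_ne hjK, Pi.single_eq_of_ne hjK]
          rw [heq]
          exact ((differentiable_id.smul_const _).const_add _)
        have hηd : DifferentiableOn ℂ η (ball (u₀ K) r) :=
          hψ.comp haffd.differentiableOn fun ζ hζ => hupd ζ (mem_ball.mp hζ)
        have hηa : AnalyticOnNhd ℂ η (ball (u₀ K) r) := hηd.analyticOnNhd isOpen_ball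
        have hηz : ∀ s : ℝ, |s| < r → η (u₀ K + (s : ℂ)) = 0 := by
          intro s hs
          have hdist : dist (u₀ K + (s : ℂ)) (u₀ K) < r := by
            rw [dist_eq_norm]
            simpa [Complex.norm_real] using hs
          have hmem := hupd _ hdist
          refine ih _ hmem fun j hj => ?_
          rcases eq_or_ne j K with rfl | hjK
          · rw [Function.update_self]
            simp [hreal _ hK0]
          · rw [Function.update_of_ne hjK]
            refine h j ?_
            have hne : (j : ℕ) ≠ k + 1 := fun hc => hjK (Fin.ext (by simp [hK, hc]))
            omega
        have hfreq : ∃ᶠ ζ in nhdsWithin (u₀ K) {(u₀ K)}ᶜ, η ζ = 0 := by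
          set a : ℕ → ℝ := fun m => (r / 2) * (1 / (m + 1)) with ha
          have hapos : ∀ m : ℕ, 0 < a m := fun m => by positivity
          have halt : ∀ m : ℕ, |a m| < r := by
            intro m
            rw [abs_of_pos (hapos m)]
            show r / 2 * (1 / (m + 1)) < r
            have h1 : (1 : ℝ) / (m + 1) ≤ 1 := by
              rw [div_le_one (by positivity)]
              simp
            nlinarith
          have htend : Filter.Tendsto (fun m : ℕ => u₀ K + ((a m : ℝ) : ℂ))
              Filter.atTop (nhdsWithin (u₀ K) {(u₀ K)}ᶜ) := by
            apply tendsto_nhdsWithin_of_tendsto_nhds_of_eventually_within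
            · have h1 : Filter.Tendsto a Filter.atTop (nhds 0) := by
                have := tendsto_one_div_add_atTop_nhds_zero_nat.const_mul (r / 2)
                simpa [ha, mul_comm] using this
              have h2 : Filter.Tendsto (fun m : ℕ => ((a m : ℝ) : ℂ)) Filter.atTop
                  (nhds (0 : ℂ)) := by
                simpa [Function.comp_def] using (Complex.continuous_ofReal.tendsto 0).comp h1
              simpa using tendsto_const_nhds.add h2
            · refine Filter.Eventually.of_forall fun m => ?_
              simp only [Set.mem_compl_iff, Set.mem_singleton_iff]
              intro hc
              have : ((a m : ℝ) : ℂ) = 0 := by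
                have := congrArg (· - u₀ K) hc
                simpa using this
              exact absurd (by exact_mod_cast this) (ne_of_gt (hapos m))
          exact htend.frequently (Filter.Frequently.of_forall fun m => hηz (a m) (halt m))
        have hEq := hηa.eqOn_zero_of_preconnected_of_frequently_eq_zero
          (convex_ball _ _).isPreconnected (mem_ball_self hr) hfreq
        have huK : u K ∈ ball (u₀ K) r :=
          mem_ball.mpr (lt_of_le_of_lt (dist_le_pi_dist u u₀ K) (mem_ball.mp hu))
        have := hEq huK
        simpa [hη, Function.update_eq_self] using this
      · exact ih u hu fun j hj => h j (by have := j.isLt; omega)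
  intro u hu
  refine key n u hu fun j hj => absurd j.isLt (by omega)

lemma eqOn_of_eventuallyEq {n : ℕ} {F F' : (Fin n → ℂ) → ℂ} {D : Set (Fin n → ℂ)}
    (hDopen : IsOpen D) (hDconn : IsPreconnected D)
    (hF : DifferentiableOn ℂ F D) (hF' : DifferentiableOn ℂ F' D)
    {x₀ : Fin n → ℂ} (hx₀ : x₀ ∈ D) (hloc : F =ᶠ[nhds x₀] F') : Set.EqOn F F' D := by
  have hball : ∀ c ρ, 0 < ρ → ball c ρ ⊆ D → F =ᶠ[nhds c] F' →
      ∀ p ∈ ball c ρ, F p = F' p := by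
    intro c ρ hρ hsub hc p hp
    rcases eq_or_ne p c with rfl | hpc
    · exact hc.eq_of_nhds
    · set v := p - c with hv
      have hvne : v ≠ 0 := sub_ne_zero.mpr hpc
      have hvpos : 0 < ‖v‖ := norm_pos_iff.mpr hvne
      set R := ρ / ‖v‖ with hR
      have hRpos : 0 < R := div_pos hρ hvpos
      set h : ℂ → ℂ := fun t => F (c + t • v) - F' (c + t • v) with hh
      have hline : ∀ t : ℂ, t ∈ ball (0:ℂ) R → c + t • v ∈ ball c ρ := by
        intro t ht
        rw [mem_ball, dist_eq_norm, add_sub_cancel_left, norm_smul]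
        calc ‖t‖ * ‖v‖ < R * ‖v‖ := by
              refine mul_lt_mul_of_pos_right ?_ hvpos
              simpa [mem_ball, dist_zero_right] using ht
          _ = ρ := div_mul_cancel₀ _ (ne_of_gt hvpos)
      have hcurve : Differentiable ℂ fun t : ℂ => c + t • v :=
        (differentiable_id.smul_const v).const_add c
      have hhd : DifferentiableOn ℂ h (ball (0:ℂ) R) :=
        (hF.comp hcurve.differentiableOn fun t ht => hsub (hline t ht)).sub
          (hF'.comp hcurve.differentiableOn fun t ht => hsub (hline t ht))
      have hha : AnalyticOnNhd ℂ h (ball 0 R) := hhd.analyticOnNhd isOpen_ball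
      have hfreq : ∃ᶠ t in nhdsWithin (0:ℂ) {(0:ℂ)}ᶜ, h t = 0 := by
        have hev : ∀ᶠ t in nhds (0:ℂ), h t = 0 := by
          have htend : Filter.Tendsto (fun t : ℂ => c + t • v) (nhds 0) (nhds c) := by
            have := (hcurve.continuous.tendsto 0)
            simpa using this
          exact (htend.eventually hc).mono fun t ht => by simp [hh, ht]
        exact (hev.filter_mono nhdsWithin_le_nhds).frequently
      have hzero := hha.eqOn_zero_of_preconnected_of_frequently_eq_zero
        (convex_ball _ _).isPreconnected (mem_ball_self hRpos) hfreq
      have h1 : (1:ℂ) ∈ ball (0:ℂ) R := by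
        rw [mem_ball, dist_zero_right, norm_one, hR, lt_div_iff₀ hvpos, one_mul]
        simpa [hv, dist_eq_norm] using mem_ball.mp hp
      have h2 : F (c + 1 • v) - F' (c + 1 • v) = 0 := by
        have := hzero h1
        simpa [hh] using this
      rw [one_smul, hv] at h2
      simpa using sub_eq_zero.mp h2
  set V := {x : Fin n → ℂ | F =ᶠ[nhds x] F'} with hV
  have hVopen : IsOpen V := by
    refine isOpen_iff_mem_nhds.mpr fun x hx => ?_
    exact hx.eventuallyEq_nhds.mono fun y hy => hy
  have hclosed : closure V ∩ D ⊆ V := by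
    rintro y ⟨hyc, hyD⟩
    obtain ⟨ρ, hρ, hsub⟩ := Metric.isOpen_iff.mp hDopen y hyD
    obtain ⟨x, hxV, hxy⟩ : ∃ x ∈ V, dist y x < ρ / 2 := by
      have := Metric.mem_closure_iff.mp hyc (ρ/2) (half_pos hρ)
      obtain ⟨b, hbV, hb⟩ := this
      exact ⟨b, hbV, hb⟩
    have hsub2 : ball x (ρ/2) ⊆ D := fun q hq => hsub (by
      rw [mem_ball] at hq ⊢
      calc dist q y ≤ dist q x + dist x y := dist_triangle _ _ _
        _ < ρ/2 + ρ/2 := by rw [dist_comm x y]; exact add_lt_add hq hxy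
        _ = ρ := add_halves ρ)
    have hagree := hball x (ρ/2) (half_pos hρ) hsub2 hxV
    have hyB : y ∈ ball x (ρ/2) := mem_ball.mpr hxy
    have : ∀ᶠ q in nhds y, q ∈ ball x (ρ/2) := isOpen_ball.eventually_mem hyB
    exact this.mono fun q hq => hagree q hq
  have hDV : D ⊆ V := hDconn.subset_of_closure_inter_subset hVopen ⟨x₀, hx₀, hloc⟩ hclosed
  exact fun x hx => (hDV hx).eq_of_nhds
end Helpers

/-- `f : 𝔻 → D` is a complex geodesic of `D ⊆ ℂⁿ`: it is holomorphic, maps 𝔻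
into `D`, and admits a holomorphic left inverse `g : D → 𝔻` with `g ∘ f = id`. -/
def IsComplexGeodesic {n : ℕ} (D : Set (Fin n → ℂ)) (f : ℂ → Fin n → ℂ) : Prop :=
  DifferentiableOn ℂ f {w : ℂ | ‖w‖ < 1} ∧
  (∀ w : ℂ, ‖w‖ < 1 → f w ∈ D) ∧
  ∃ g : (Fin n → ℂ) → ℂ, DifferentiableOn ℂ g D ∧ (∀ x ∈ D, ‖g x‖ < 1) ∧
    ∀ w : ℂ, ‖w‖ < 1 → g (f w) = w

set_option maxHeartbeats 2000000 in
/-- Let `D ⊆ ℂⁿ` (`n ≥ 2`) be a convex domain, `σ ∈ 𝔻 \ {0}`, and let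
`f⁰, …, f^{n−1} : 𝔻 → D` be complex geodesics all sending `0 ↦ w` and `σ ↦ z`,
whose values at some `l0 ∈ 𝔻` are affinely independent (equivalently, the
differences `fʲ(l0) − f^{n-1}(l0)`, `j < n−1`, are linearly independent). Then
there is exactly one holomorphic `F : D → 𝔻` which is a left inverse of every
complex geodesic of `D` sending `0 ↦ w` and `σ ↦ z`. -/
theorem unique_left_inverse_convex {n : ℕ} (hn : 2 ≤ n)
    (D : Set (Fin n → ℂ)) (hDopen : IsOpen D) (hDconv : Convex ℝ D)
    (hDconn : IsConnected D) (hDbd : Bornology.IsBounded D)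
    (σ : ℂ) (hσ : ‖σ‖ < 1) (hσ0 : σ ≠ 0)
    (w z : Fin n → ℂ)
    (f : Fin n → ℂ → Fin n → ℂ)
    (hgeo : ∀ i, IsComplexGeodesic D (f i))
    (h0 : ∀ i, f i 0 = w) (hσval : ∀ i, f i σ = z)
    (hind : ∃ l0 : ℂ, ‖l0‖ < 1 ∧ AffineIndependent ℂ fun i : Fin n => f i l0) :
    ∃ F : (Fin n → ℂ) → ℂ,
      (DifferentiableOn ℂ F D ∧ (∀ x ∈ D, ‖F x‖ < 1) ∧
        ∀ g : ℂ → Fin n → ℂ, IsComplexGeodesic D g → g 0 = w → g σ = z →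
          ∀ v : ℂ, ‖v‖ < 1 → F (g v) = v) ∧
      ∀ F' : (Fin n → ℂ) → ℂ,
        (DifferentiableOn ℂ F' D ∧ (∀ x ∈ D, ‖F' x‖ < 1) ∧
          ∀ g : ℂ → Fin n → ℂ, IsComplexGeodesic D g → g 0 = w → g σ = z →
            ∀ v : ℂ, ‖v‖ < 1 → F' (g v) = v) →
        Set.EqOn F F' D := by
  haveI : NeZero n := ⟨by omega⟩
  obtain ⟨l0, hl0, haff⟩ := hind
  obtain ⟨hf0d, hf0D, g₀, hg₀d, hg₀b, hg₀inv⟩ := hgeo 0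
  have hw : f 0 0 = w := h0 0
  have hzv : f 0 σ = z := hσval 0
  have hF0 : g₀ w = 0 := by rw [← hw]; exact hg₀inv 0 (by simp)
  have hFσ : g₀ z = σ := by rw [← hzv]; exact hg₀inv σ hσ
  have hpropF : ∀ g : ℂ → Fin n → ℂ, IsComplexGeodesic D g → g 0 = w → g σ = z →
      ∀ v : ℂ, ‖v‖ < 1 → g₀ (g v) = v := by
    intro g hg hg0 hgσ
    exact key_left_inverse hσ hσ0 hg₀d hg₀b hg.1 hg.2.1
      (by rw [hg0]; exact hF0) (by rw [hgσ]; exact hFσ)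
  refine ⟨g₀, ⟨hg₀d, hg₀b, hpropF⟩, ?_⟩
  rintro F' ⟨hF'd, hF'b, hF'prop⟩
  -- the convex-combination geodesics
  set e : Finset (Fin n) := Finset.univ.erase 0 with he
  set G : (Fin n → ℂ) → ℂ → (Fin n → ℂ) :=
    fun t l => f 0 l + ∑ j ∈ e, t j • (f j l - f 0 l) with hG
  have hDisc : IsOpen {v : ℂ | ‖v‖ < 1} := isOpen_lt continuous_norm continuous_const
  have hcombo : ∀ t : Fin n → ℂ, (∀ j ∈ e, (t j).im = 0) → (∀ j ∈ e, 0 ≤ (t j).re) →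
      (∑ j ∈ e, (t j).re) ≤ 1 →
      IsComplexGeodesic D (G t) ∧ G t 0 = w ∧ G t σ = z := by
    intro t him hre hsumle
    have hco : ∀ j ∈ e, ((t j).re : ℂ) = t j := fun j hj =>
      Complex.ext (by simp) (by simp [him j hj])
    have hmem : ∀ l : ℂ, ‖l‖ < 1 → G t l ∈ D := by
      intro l hlv
      set c : Fin n → ℝ := fun j => if j = 0 then 1 - ∑ j ∈ e, (t j).re else (t j).re with hc
      have hce : ∀ j ∈ e, c j = (t j).re := fun j hj => by
        simp only [hc, if_neg (Finset.ne_of_mem_erase hj)]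
      have hsum1 : ∑ j, c j = 1 := by
        rw [← Finset.add_sum_erase _ c (Finset.mem_univ 0), ← he,
          Finset.sum_congr rfl hce]
        simp [hc]
      have hnn : ∀ j ∈ Finset.univ, 0 ≤ c j := by
        intro j _
        by_cases hj : j = 0
        · subst hj; simp only [hc, if_pos rfl]; linarith
        · have hje : j ∈ e := by rw [he]; exact Finset.mem_erase.mpr ⟨hj, Finset.mem_univ _⟩
          rw [hce j hje]; exact hre j hje
      have h1 : ∀ j ∈ e, c j • f j l = t j • f j l := fun j hj => by
        rw [hce j hj, ← Complex.coe_smul, hco j hj]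
      have h2 : c 0 • f 0 l = f 0 l - ∑ j ∈ e, t j • f 0 l := by
        simp only [hc, if_pos rfl]
        rw [sub_smul, one_smul, Finset.sum_smul]
        congr 1
        exact Finset.sum_congr rfl fun j hj => by rw [← Complex.coe_smul, hco j hj]
      have hrepr : G t l = ∑ j, c j • f j l := by
        rw [← Finset.add_sum_erase _ (fun j => c j • f j l) (Finset.mem_univ 0), ← he]
        calc G t l = f 0 l + ∑ j ∈ e, (t j • f j l - t j • f 0 l) := by
              show f 0 l + _ = _
              congr 1
              exact Finset.sum_congr rfl fun j _ => smul_sub _ _ _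
          _ = f 0 l + (∑ j ∈ e, t j • f j l - ∑ j ∈ e, t j • f 0 l) := by
              rw [Finset.sum_sub_distrib]
          _ = (f 0 l - ∑ j ∈ e, t j • f 0 l) + ∑ j ∈ e, t j • f j l := by abel
          _ = c 0 • f 0 l + ∑ j ∈ e, c j • f j l := by
              rw [h2]
              congr 1
              exact (Finset.sum_congr rfl h1).symm
      rw [hrepr]
      exact hDconv.sum_mem hnn hsum1 fun j _ => (hgeo j).2.1 l hlv
    have hG0 : G t 0 = w := by
      show f 0 0 + ∑ j ∈ e, t j • (f j 0 - f 0 0) = w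
      have : ∀ j ∈ e, t j • (f j 0 - f 0 0) = 0 := fun j hj => by
        rw [h0 j, hw, sub_self, smul_zero]
      rw [Finset.sum_congr rfl this, hw]
      simp
    have hGσ : G t σ = z := by
      show f 0 σ + ∑ j ∈ e, t j • (f j σ - f 0 σ) = z
      have : ∀ j ∈ e, t j • (f j σ - f 0 σ) = 0 := fun j hj => by
        rw [hσval j, hzv, sub_self, smul_zero]
      rw [Finset.sum_congr rfl this, hzv]
      simp
    have hGd : DifferentiableOn ℂ (G t) {v : ℂ | ‖v‖ < 1} := by
      apply DifferentiableOn.add hf0d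
      apply DifferentiableOn.fun_sum
      intro j hj
      exact ((hgeo j).1.sub hf0d).const_smul (t j)
    exact ⟨⟨hGd, hmem, g₀, hg₀d, hg₀b, key_left_inverse hσ hσ0 hg₀d hg₀b hGd hmem
      (by rw [hG0]; exact hF0) (by rw [hGσ]; exact hFσ)⟩, hG0, hGσ⟩
  -- the parametrized map Φ
  set Φ : (Fin n → ℂ) → (Fin n → ℂ) := fun u => G u (u 0) with hΦ
  set u₀ : Fin n → ℂ := fun j => if j = 0 then l0 else (((n : ℝ)⁻¹ : ℝ) : ℂ) with hu₀
  have hu₀0 : u₀ 0 = l0 := by simp [hu₀]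
  have hu₀j : ∀ j ∈ e, u₀ j = (((n : ℝ)⁻¹ : ℝ) : ℂ) := fun j hj => by
    simp only [hu₀, if_neg (Finset.ne_of_mem_erase hj)]
  have hNpos : (0:ℝ) < (n:ℝ) := by positivity
  have hcard : (e.card : ℝ) = (n : ℝ) - 1 := by
    rw [he, Finset.card_erase_of_mem (Finset.mem_univ 0), Finset.card_univ, Fintype.card_fin]
    have : 1 ≤ n := by omega
    push_cast [this]
    ring
  have hu₀re : ∀ j ∈ e, (u₀ j).im = 0 ∧ (u₀ j).re = (n:ℝ)⁻¹ := fun j hj => by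
    rw [hu₀j j hj]; simp
  have hu₀ok : (∀ j ∈ e, (u₀ j).im = 0) ∧ (∀ j ∈ e, 0 ≤ (u₀ j).re) ∧
      (∑ j ∈ e, (u₀ j).re) ≤ 1 := by
    refine ⟨fun j hj => (hu₀re j hj).1, fun j hj => by rw [(hu₀re j hj).2]; positivity, ?_⟩
    rw [Finset.sum_congr rfl fun j hj => (hu₀re j hj).2, Finset.sum_const, nsmul_eq_mul, hcard]
    rw [sub_mul, mul_inv_cancel₀ (ne_of_gt hNpos)]
    have : 0 ≤ (n:ℝ)⁻¹ := by positivity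
    linarith
  -- the real-coefficient criterion on a small ball
  have hO : IsOpen {u : Fin n → ℂ | ‖u 0‖ < 1} :=
    isOpen_lt ((continuous_apply 0).norm) continuous_const
  have hΦd : DifferentiableOn ℂ Φ {u : Fin n → ℂ | ‖u 0‖ < 1} := by
    have hproj : ∀ i : Fin n, Differentiable ℂ (fun u : Fin n → ℂ => u i) := by
      intro i
      exact (ContinuousLinearMap.proj (R := ℂ) (φ := fun _ : Fin n => ℂ) i).differentiable
    have hmapsTo : ∀ u : Fin n → ℂ, u ∈ {u : Fin n → ℂ | ‖u 0‖ < 1} → u 0 ∈ {v : ℂ | ‖v‖ < 1} :=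
      fun u hu => hu
    refine DifferentiableOn.add ?_ ?_
    · exact hf0d.comp ((hproj 0).differentiableOn) hmapsTo
    · refine DifferentiableOn.fun_sum fun j hj => DifferentiableOn.smul
        ((hproj j).differentiableOn) ?_
      exact ((hgeo j).1.sub hf0d).comp ((hproj 0).differentiableOn) hmapsTo
  have hΩ : IsOpen ({u : Fin n → ℂ | ‖u 0‖ < 1} ∩ Φ ⁻¹' D) :=
    hΦd.continuousOn.isOpen_inter_preimage hO hDopen
  have hu₀Ω : u₀ ∈ {u : Fin n → ℂ | ‖u 0‖ < 1} ∩ Φ ⁻¹' D := by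
    constructor
    · show ‖u₀ 0‖ < 1
      rw [hu₀0]; exact hl0
    · show Φ u₀ ∈ D
      have := (hcombo u₀ hu₀ok.1 hu₀ok.2.1 hu₀ok.2.2).1.2.1 (u₀ 0) (by rw [hu₀0]; exact hl0)
      exact this
  obtain ⟨r₁, hr₁, hball₁⟩ := Metric.isOpen_iff.mp hΩ u₀ hu₀Ω
  set r : ℝ := min r₁ ((n:ℝ)⁻¹ * (n:ℝ)⁻¹) with hrdef
  have hr0 : 0 < r := lt_min hr₁ (by positivity)
  have hrn : r ≤ (n:ℝ)⁻¹ * (n:ℝ)⁻¹ := min_le_right _ _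
  have hballΩ : ball u₀ r ⊆ {u : Fin n → ℂ | ‖u 0‖ < 1} ∩ Φ ⁻¹' D :=
    fun u hu => hball₁ (ball_subset_ball (min_le_left _ _) hu)
  -- coordinate estimates
  have hcoord : ∀ u ∈ ball u₀ r, ∀ j ∈ e, |(u j).re - (n:ℝ)⁻¹| < r ∧ (u j).im = (u j).im := by
    intro u hu j hj
    refine ⟨?_, rfl⟩
    have h1 : dist (u j) (u₀ j) < r := lt_of_le_of_lt (dist_le_pi_dist u u₀ j) (mem_ball.mp hu)
    rw [hu₀j j hj] at h1
    have h2 : |(u j - (((n : ℝ)⁻¹ : ℝ) : ℂ)).re| ≤ ‖u j - (((n : ℝ)⁻¹ : ℝ) : ℂ)‖ :=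
      Complex.abs_re_le_norm _
    rw [Complex.sub_re, Complex.ofReal_re] at h2
    calc |(u j).re - (n:ℝ)⁻¹| ≤ ‖u j - (((n : ℝ)⁻¹ : ℝ) : ℂ)‖ := h2
      _ < r := by rwa [Complex.dist_eq] at h1
  have hreal_ok : ∀ u ∈ ball u₀ r, (∀ j ∈ e, (u j).im = 0) →
      (∀ j ∈ e, 0 ≤ (u j).re) ∧ (∑ j ∈ e, (u j).re) ≤ 1 := by
    intro u hu him
    have hin : ∀ j ∈ e, (n:ℝ)⁻¹ - r < (u j).re ∧ (u j).re < (n:ℝ)⁻¹ + r := by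
      intro j hj
      have := (hcoord u hu j hj).1
      rw [abs_lt] at this
      constructor <;> linarith [this.1, this.2]
    have hinv_le : (n:ℝ)⁻¹ * (n:ℝ)⁻¹ ≤ (n:ℝ)⁻¹ := by
      have h2 : (1:ℝ) ≤ (n:ℝ) := by exact_mod_cast (by omega : 1 ≤ n)
      have h3 : (n:ℝ)⁻¹ ≤ 1 := by
        rw [inv_le_one_iff₀]; right; exact h2
      nlinarith [inv_nonneg.mpr (le_of_lt hNpos)]
    constructor
    · intro j hj
      have := (hin j hj).1
      nlinarith [inv_nonneg.mpr (le_of_lt hNpos)]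
    · have hbound : ∀ j ∈ e, (u j).re ≤ (n:ℝ)⁻¹ + (n:ℝ)⁻¹ * (n:ℝ)⁻¹ := by
        intro j hj
        have := (hin j hj).2
        linarith
      calc ∑ j ∈ e, (u j).re ≤ ∑ j ∈ e, ((n:ℝ)⁻¹ + (n:ℝ)⁻¹ * (n:ℝ)⁻¹) :=
            Finset.sum_le_sum hbound
        _ = ((n:ℝ) - 1) * ((n:ℝ)⁻¹ + (n:ℝ)⁻¹ * (n:ℝ)⁻¹) := by
            rw [Finset.sum_const, nsmul_eq_mul, hcard]
        _ ≤ 1 := by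
            have h2 : (2:ℝ) ≤ (n:ℝ) := by exact_mod_cast hn
            have hinv : (n:ℝ) * (n:ℝ)⁻¹ = 1 := mul_inv_cancel₀ (ne_of_gt hNpos)
            nlinarith [sq_nonneg ((n:ℝ)⁻¹), inv_nonneg.mpr (le_of_lt hNpos)]
  -- both candidates invert Φ on real points of the ball
  have hFΦ : ∀ Fc : (Fin n → ℂ) → ℂ,
      (∀ g : ℂ → Fin n → ℂ, IsComplexGeodesic D g → g 0 = w → g σ = z →
        ∀ v : ℂ, ‖v‖ < 1 → Fc (g v) = v) →
      ∀ u ∈ ball u₀ r, (∀ j ∈ e, (u j).im = 0) → Fc (Φ u) = u 0 := by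
    intro Fc hFcprop u hu him
    obtain ⟨hnn, hsle⟩ := hreal_ok u hu him
    obtain ⟨hgeod, hg0, hgσ⟩ := hcombo u him hnn hsle
    have hu0 : ‖u 0‖ < 1 := (hballΩ hu).1
    exact hFcprop (G u) hgeod hg0 hgσ (u 0) hu0
  -- ψ vanishes on the whole complex ball
  have hψzero : ∀ u ∈ ball u₀ r, g₀ (Φ u) = F' (Φ u) := by
    have hψd : DifferentiableOn ℂ (fun u => g₀ (Φ u) - F' (Φ u)) (ball u₀ r) := by
      have hΦball : DifferentiableOn ℂ Φ (ball u₀ r) :=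
        hΦd.mono fun u hu => (hballΩ hu).1
      have hmapsD : ∀ u ∈ ball u₀ r, Φ u ∈ D := fun u hu => (hballΩ hu).2
      exact (hg₀d.comp hΦball hmapsD).sub (hF'd.comp hΦball hmapsD)
    have hψz : ∀ u ∈ ball u₀ r, (∀ j : Fin n, j ≠ 0 → (u j).im = 0) →
        g₀ (Φ u) - F' (Φ u) = 0 := by
      intro u hu him
      have him' : ∀ j ∈ e, (u j).im = 0 := fun j hj => him j (Finset.ne_of_mem_erase hj)
      rw [hFΦ g₀ hpropF u hu him', hFΦ F' hF'prop u hu him', sub_self]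
    have hu₀real : ∀ j : Fin n, j ≠ 0 → (u₀ j).im = 0 := fun j hj =>
      (hu₀re j (Finset.mem_erase.mpr ⟨hj, Finset.mem_univ _⟩)).1
    intro u hu
    have := vanish_of_real_vanish _ u₀ r hr0 hu₀real hψd hψz u hu
    exact sub_eq_zero.mp this
  -- analyticity of Φ at u₀
  have hdiscnhds : {v : ℂ | ‖v‖ < 1} ∈ nhds l0 := hDisc.mem_nhds hl0
  have hfa : ∀ j : Fin n, AnalyticAt ℂ (f j) l0 := fun j => (hgeo j).1.analyticAt hdiscnhds
  have hproja : ∀ i : Fin n, AnalyticAt ℂ (fun u : Fin n → ℂ => u i) u₀ := fun i =>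
    (ContinuousLinearMap.proj (R := ℂ) (φ := fun _ : Fin n => ℂ) i).analyticAt u₀
  have hfua : ∀ j : Fin n, AnalyticAt ℂ (fun u : Fin n → ℂ => f j (u 0)) u₀ := by
    intro j
    have h1 : AnalyticAt ℂ (f j) (u₀ 0) := by rw [hu₀0]; exact hfa j
    have h2 := AnalyticAt.comp (f := fun u : Fin n → ℂ => u 0) h1 (hproja 0)
    simpa [Function.comp_def] using h2
  have hΦeq : Φ = fun u : Fin n → ℂ =>
      f 0 (u 0) + ∑ j ∈ e, u j • (f j (u 0) - f 0 (u 0)) := by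
    simp only [hΦ, hG]
  have hΦa : AnalyticAt ℂ Φ u₀ := by
    rw [hΦeq]
    refine AnalyticAt.add (hfua 0) ?_
    exact Finset.analyticAt_fun_sum _ fun j hj => (hproja j).smul ((hfua j).sub (hfua 0))
  set A := fderiv ℂ Φ u₀ with hA
  have hstrict : HasStrictFDerivAt Φ A u₀ := hΦa.hasStrictFDerivAt
  have hAderiv : HasFDerivAt Φ A u₀ := hstrict.hasFDerivAt
  -- line computations
  have hΦline : ∀ j ∈ e, ∀ s : ℂ,
      Φ (u₀ + s • (Pi.single j 1 : Fin n → ℂ)) = Φ u₀ + s • (f j l0 - f 0 l0) := by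
    intro j hj s
    have hj0 : j ≠ 0 := Finset.ne_of_mem_erase hj
    have hzero : (u₀ + s • (Pi.single j 1 : Fin n → ℂ)) 0 = l0 := by
      simp [Pi.single_eq_of_ne (Ne.symm hj0), hu₀0]
    rw [hΦeq]
    simp only []
    rw [hzero]
    have hsum : ∑ i ∈ e, (u₀ + s • (Pi.single j 1 : Fin n → ℂ)) i • (f i l0 - f 0 l0)
        = ∑ i ∈ e, u₀ i • (f i l0 - f 0 l0) + s • (f j l0 - f 0 l0) := by
      have hterm : ∀ i ∈ e, (u₀ + s • (Pi.single j 1 : Fin n → ℂ)) i • (f i l0 - f 0 l0)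
          = u₀ i • (f i l0 - f 0 l0) + (s * (Pi.single j 1 : Fin n → ℂ) i) • (f i l0 - f 0 l0) := by
        intro i hi
        simp [add_smul]
      rw [Finset.sum_congr rfl hterm, Finset.sum_add_distrib]
      congr 1
      rw [Finset.sum_eq_single_of_mem j hj]
      · simp
      · intro i hi hij
        rw [Pi.single_eq_of_ne hij]
        simp
    rw [hsum, hu₀0, add_assoc]
  have hΦline0 : ∀ s : ℂ, Φ (u₀ + s • (Pi.single 0 1 : Fin n → ℂ)) = G u₀ (l0 + s) := by
    intro s
    have hzero : (u₀ + s • (Pi.single 0 1 : Fin n → ℂ)) 0 = l0 + s := by simp [hu₀0]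
    rw [hΦeq]
    simp only [hG]
    rw [hzero]
    congr 1
    refine Finset.sum_congr rfl fun i hi => ?_
    have : (u₀ + s • (Pi.single 0 1 : Fin n → ℂ)) i = u₀ i := by
      simp [Pi.single_eq_of_ne (Finset.ne_of_mem_erase hi)]
    rw [this]
  -- directional derivatives
  have hcurve : ∀ v : Fin n → ℂ, HasDerivAt (fun s : ℂ => u₀ + s • v) v 0 := by
    intro v
    simpa using ((hasDerivAt_id (0:ℂ)).smul_const v).const_add u₀
  have hdirA : ∀ v : Fin n → ℂ, HasDerivAt (fun s : ℂ => Φ (u₀ + s • v)) (A v) 0 := by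
    intro v
    have h0' : u₀ + (0:ℂ) • v = u₀ := by simp
    have hΦat : HasFDerivAt Φ A (u₀ + (0:ℂ) • v) := by rw [h0']; exact hAderiv
    have h2 := hΦat.comp_hasDerivAt 0 (hcurve v)
    simpa [Function.comp_def] using h2
  have hAj : ∀ j ∈ e, A ((Pi.single j 1 : Fin n → ℂ)) = f j l0 - f 0 l0 := by
    intro j hj
    have h1 := hdirA ((Pi.single j 1 : Fin n → ℂ))
    have h2 : (fun s : ℂ => Φ (u₀ + s • (Pi.single j 1 : Fin n → ℂ))) =
        fun s => Φ u₀ + s • (f j l0 - f 0 l0) := funext fun s => hΦline j hj s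
    rw [h2] at h1
    have h3 : HasDerivAt (fun s : ℂ => Φ u₀ + s • (f j l0 - f 0 l0)) (f j l0 - f 0 l0) 0 := by
      simpa using ((hasDerivAt_id (0:ℂ)).smul_const (f j l0 - f 0 l0)).const_add (Φ u₀)
    exact h1.unique h3
  have hx₀D : Φ u₀ ∈ D := hu₀Ω.2
  have hg₀at : DifferentiableAt ℂ g₀ (Φ u₀) := hg₀d.differentiableAt (hDopen.mem_nhds hx₀D)
  set B := fderiv ℂ g₀ (Φ u₀) with hB
  have hBderiv : HasFDerivAt g₀ B (Φ u₀) := hg₀at.hasFDerivAt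
  have hB0 : B (A ((Pi.single 0 1 : Fin n → ℂ))) = 1 := by
    have h1 : HasDerivAt (fun s : ℂ => g₀ (Φ (u₀ + s • (Pi.single 0 1 : Fin n → ℂ))))
        (B (A ((Pi.single 0 1 : Fin n → ℂ)))) 0 := by
      have h0' : u₀ + (0:ℂ) • (Pi.single 0 1 : Fin n → ℂ) = u₀ := by simp
      have hgat : HasFDerivAt g₀ B (Φ (u₀ + (0:ℂ) • (Pi.single 0 1 : Fin n → ℂ))) := by
        rw [h0']; exact hBderiv
      have h2 := hgat.comp_hasDerivAt 0 (hdirA ((Pi.single 0 1 : Fin n → ℂ)))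
      simpa [Function.comp_def] using h2
    have hev : (fun s : ℂ => g₀ (Φ (u₀ + s • (Pi.single 0 1 : Fin n → ℂ)))) =ᶠ[nhds 0] fun s => l0 + s := by
      have hcont : Continuous fun s : ℂ => l0 + s := continuous_const.add continuous_id
      have hmem : (fun s : ℂ => l0 + s) 0 ∈ {v : ℂ | ‖v‖ < 1} := by simpa using hl0
      have hop : ∀ᶠ s : ℂ in nhds 0, ‖l0 + s‖ < 1 :=
        hcont.continuousAt.eventually_mem (hDisc.mem_nhds hmem)
      refine hop.mono fun s hs => ?_
      show g₀ (Φ (u₀ + s • (Pi.single 0 1 : Fin n → ℂ))) = l0 + s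
      rw [hΦline0 s]
      obtain ⟨hgeod, hg0', hgσ'⟩ := hcombo u₀ hu₀ok.1 hu₀ok.2.1 hu₀ok.2.2
      exact hpropF (G u₀) hgeod hg0' hgσ' (l0 + s) hs
    have h2 : HasDerivAt (fun s : ℂ => l0 + s) 1 0 := by
      simpa using (hasDerivAt_id (0:ℂ)).const_add l0
    exact (h1.congr_of_eventuallyEq hev.symm).unique h2
  have hBd : ∀ j ∈ e, B (f j l0 - f 0 l0) = 0 := by
    intro j hj
    have hcurveR : HasDerivAt (fun s : ℝ => Φ u₀ + s • (f j l0 - f 0 l0))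
        (f j l0 - f 0 l0) 0 := by
      simpa using ((hasDerivAt_id (0:ℝ)).smul_const (f j l0 - f 0 l0)).const_add (Φ u₀)
    have h1 : HasDerivAt (fun s : ℝ => g₀ (Φ u₀ + s • (f j l0 - f 0 l0)))
        ((B.restrictScalars ℝ) (f j l0 - f 0 l0)) 0 := by
      have h0' : Φ u₀ + (0:ℝ) • (f j l0 - f 0 l0) = Φ u₀ := by simp
      have hgat : HasFDerivAt g₀ (B.restrictScalars ℝ)
          (Φ u₀ + (0:ℝ) • (f j l0 - f 0 l0)) := by
        rw [h0']; exact hBderiv.restrictScalars ℝ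
      have h2 := hgat.comp_hasDerivAt 0 hcurveR
      simpa [Function.comp_def] using h2
    have hev : (fun s : ℝ => g₀ (Φ u₀ + s • (f j l0 - f 0 l0))) =ᶠ[nhds 0] fun _ => l0 := by
      have hop : ∀ᶠ s : ℝ in nhds 0, |s| < r := by
        have hs1 : {s : ℝ | |s| < r} = ball (0:ℝ) r := by
          ext s; simp [Real.dist_eq]
        have : {s : ℝ | |s| < r} ∈ nhds (0:ℝ) := by rw [hs1]; exact ball_mem_nhds _ hr0
        exact this
      refine hop.mono fun s hs => ?_
      have humem : u₀ + ((s:ℝ):ℂ) • (Pi.single j 1 : Fin n → ℂ) ∈ ball u₀ r := by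
        rw [mem_ball, dist_pi_lt_iff hr0]
        intro i
        rcases eq_or_ne i j with rfl | hij
        · simp only [Pi.add_apply, Pi.smul_apply, Pi.single_eq_same, smul_eq_mul, mul_one]
          rw [Complex.dist_eq, add_sub_cancel_left]
          simpa using hs
        · simp only [Pi.add_apply, Pi.smul_apply, Pi.single_eq_of_ne hij, smul_eq_mul,
            mul_zero, add_zero]
          simpa using hr0
      have hreal2 : ∀ i ∈ e, ((u₀ + ((s:ℝ):ℂ) • (Pi.single j 1 : Fin n → ℂ)) i).im = 0 := by
        intro i hi
        rcases eq_or_ne i j with rfl | hij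
        · simp [Pi.single_eq_same, (hu₀re i hi).1, Complex.add_im]
        · simp [Pi.single_eq_of_ne hij, (hu₀re i hi).1]
      have hval := hFΦ g₀ hpropF _ humem hreal2
      rw [hΦline j hj ((s:ℝ):ℂ)] at hval
      have hco2 : ((s:ℝ):ℂ) • (f j l0 - f 0 l0) = s • (f j l0 - f 0 l0) :=
        Complex.coe_smul s _
      rw [hco2] at hval
      have hu0v : (u₀ + ((s:ℝ):ℂ) • (Pi.single j 1 : Fin n → ℂ)) 0 = l0 := by
        simp [Pi.single_eq_of_ne (Ne.symm (Finset.ne_of_mem_erase hj)), hu₀0]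
      rw [hu0v] at hval
      exact hval
    have h2 := (h1.congr_of_eventuallyEq hev.symm).unique (hasDerivAt_const 0 l0)
    simpa using h2
  -- injectivity of A
  have hAzero : ∀ h : Fin n → ℂ, A h = 0 → h = 0 := by
    intro h hh
    have hdecomp : h = ∑ i : Fin n, h i • (Pi.single i 1 : Fin n → ℂ) := by
      funext i'
      rw [Finset.sum_apply]
      simp [Pi.single_apply]
    have hAh : A h = h 0 • A ((Pi.single 0 1 : Fin n → ℂ)) + ∑ j ∈ e, h j • (f j l0 - f 0 l0) := by
      conv_lhs => rw [hdecomp]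
      rw [map_sum]
      simp_rw [map_smul]
      rw [← Finset.add_sum_erase _ _ (Finset.mem_univ 0), ← he]
      congr 1
      exact Finset.sum_congr rfl fun j hj => by rw [hAj j hj]
    have h00 : h 0 = 0 := by
      have hBAh : B (A h) = h 0 := by
        rw [hAh, map_add, map_smul, hB0, map_sum]
        have hz2 : ∀ j ∈ e, B (h j • (f j l0 - f 0 l0)) = 0 := fun j hj => by
          rw [map_smul, hBd j hj, smul_zero]
        rw [Finset.sum_congr rfl hz2]
        simp
      rw [hh, map_zero] at hBAh
      exact hBAh.symm
    have hsum0 : ∑ j ∈ e, h j • (f j l0 - f 0 l0) = 0 := by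
      have h4 := hAh
      rw [hh, h00] at h4
      simpa using h4.symm
    have hli := (affineIndependent_iff_linearIndependent_vsub ℂ (fun i : Fin n => f i l0) 0).mp haff
    rw [Fintype.linearIndependent_iff] at hli
    have hiff : ∀ x : Fin n, x ∈ e ↔ x ≠ 0 := by
      intro x
      rw [he]
      simp [Finset.mem_erase]
    have hje : ∀ j : Fin n, j ≠ 0 → h j = 0 := by
      have hsub : ∑ i : {x : Fin n // x ≠ 0}, h ↑i • ((fun i : Fin n => f i l0) ↑i -ᵥ
          (fun i : Fin n => f i l0) 0) = 0 := by
        rw [← Finset.sum_subtype e hiff (fun j => h j • ((fun i : Fin n => f i l0) j -ᵥ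
          (fun i : Fin n => f i l0) 0))]
        simpa [vsub_eq_sub] using hsum0
      intro j hj
      exact hli _ hsub ⟨j, hj⟩
    funext i
    by_cases hi : i = 0
    · subst hi; simpa using h00
    · simpa using hje i hi
  have hAinj : Function.Injective A := by
    intro a b hab
    have := hAzero (a - b) (by rw [map_sub, hab, sub_self])
    exact sub_eq_zero.mp this
  have hAsurj : Function.Surjective A :=
    (LinearMap.injective_iff_surjective
      (f := (A : (Fin n → ℂ) →ₗ[ℂ] Fin n → ℂ))).mp hAinj
  set Aeq : (Fin n → ℂ) ≃L[ℂ] (Fin n → ℂ) :=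
    LinearEquiv.toContinuousLinearEquiv
      (LinearEquiv.ofBijective (A : (Fin n → ℂ) →ₗ[ℂ] Fin n → ℂ) ⟨hAinj, hAsurj⟩) with hAeqdef
  have hAeq : (Aeq : (Fin n → ℂ) →L[ℂ] Fin n → ℂ) = A := by
    ext x
    rfl
  have hmapnhds : Filter.map Φ (nhds u₀) = nhds (Φ u₀) := by
    have hstrict' : HasStrictFDerivAt Φ (Aeq : (Fin n → ℂ) →L[ℂ] Fin n → ℂ) u₀ := by
      rw [hAeq]; exact hstrict
    exact hstrict'.map_nhds_eq_of_equiv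
  have hev : g₀ =ᶠ[nhds (Φ u₀)] F' := by
    rw [Filter.EventuallyEq, ← hmapnhds, Filter.eventually_map]
    exact Filter.eventually_of_mem (ball_mem_nhds _ hr0) hψzero
  exact eqOn_of_eventuallyEq hDopen hDconn.isPreconnected hg₀d hF'd hx₀D hev
end
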